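/- arXiv:2406.16343 — 8 statements merged into one kernel-verified Lean document; each statement's English description precedes it below -/
import Mathlib

section
/- Let A* be an optimal delegation set, ū = max{b_i : i ∈ A* ∪ {0}}, and Sur = E[v_{g(A*,v)} − (ū − b_{g(A*,v)})]. Then the threshold set A_ū = {i ∈ Ω : b_i ≤ ū} satisfies f(A_ū) ≥ Sur. (This holds for arbitrary, possibly correlated, value distributions and a possibly randomized outside option.) -/
open Finset

/-!
Delegated choice with an outside option.  There are `n` actions `1, …, n`
(the nonzero elements of `Fin (n+1)`) plus the outside option, action `0`.
Action `i` has a known bias `b i`; the value profile `v : Fin (n+1) → ℝ` is drawn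
from a finitely supported distribution with support `S` and probability mass `p`.
-/

/-- Value profiles for `n` actions plus the outside option (index `0`). -/
abbrev Profile (n : ℕ) := Fin (n + 1) → ℝ

/-- `g` is a valid agent choice function for biases `b`: from the menu `A ∪ {0}` it
picks an agent-utility-maximizing action (utility of `i` is `v i + b i`),
breaking ties in favor of larger value. -/
def IsChoice (n : ℕ) (b : Fin (n + 1) → ℝ)
    (g : Finset (Fin (n + 1)) → Profile n → Fin (n + 1)) : Prop :=
  ∀ (A : Finset (Fin (n + 1))) (v : Profile n),
    g A v ∈ insert 0 A ∧
    (∀ j ∈ insert 0 A, v j + b j ≤ v (g A v) + b (g A v)) ∧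
    (∀ j ∈ insert 0 A, v j + b j = v (g A v) + b (g A v) → v j ≤ v (g A v))

/-- The principal's expected utility `f(A)` from menu `A`. -/
def util {n : ℕ} (S : Finset (Profile n)) (p : Profile n → ℝ)
    (g : Finset (Fin (n + 1)) → Profile n → Fin (n + 1))
    (A : Finset (Fin (n + 1))) : ℝ :=
  ∑ v ∈ S, p v * v (g A v)

/-- The threshold menu `A_t = {i ∈ Ω : b i ≤ t}`. -/
noncomputable def thresh (n : ℕ) (b : Fin (n + 1) → ℝ) (t : ℝ) : Finset (Fin (n + 1)) :=
  Finset.univ.filter fun i => i ≠ 0 ∧ b i ≤ t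

/-- `S, p` is a finitely supported probability distribution over nonnegative value
profiles. -/
def ValidDist {n : ℕ} (S : Finset (Profile n)) (p : Profile n → ℝ) : Prop :=
  (∀ v ∈ S, 0 ≤ p v) ∧ (∑ v ∈ S, p v = 1) ∧ ∀ v ∈ S, ∀ i, 0 ≤ v i

/-- The coordinates `v 0, v 1, …, v n` are mutually independent: the joint mass of
every profile is the product of the marginal masses of its coordinates. -/
def IndepValues {n : ℕ} (S : Finset (Profile n)) (p : Profile n → ℝ) : Prop :=
  ∀ w : Profile n,
    (∑ v ∈ S.filter fun v => v = w, p v)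
      = ∏ i : Fin (n + 1), ∑ v ∈ S.filter fun v => v i = w i, p v

/-- `Astar` is an optimal menu: a subset of `Ω` (not containing the outside
option `0`) maximizing the principal's expected utility. -/
def OptimalMenu {n : ℕ} (S : Finset (Profile n)) (p : Profile n → ℝ)
    (g : Finset (Fin (n + 1)) → Profile n → Fin (n + 1))
    (Astar : Finset (Fin (n + 1))) : Prop :=
  (0 : Fin (n + 1)) ∉ Astar ∧
    ∀ A : Finset (Fin (n + 1)), (0 : Fin (n + 1)) ∉ A →
      util S p g A ≤ util S p g Astar

/-- With `ū = max{b i : i ∈ A* ∪ {0}}`, the threshold menu `A_ū`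
secures the aligned part of the optimal utility: `f(A_ū) ≥ Sur`, where
`Sur = E[v_{g(A*,v)} − (ū − b_{g(A*,v)})]`.  This holds for arbitrary, possibly
correlated value distributions and a possibly randomized outside option. -/
theorem threshold_secures_surplus {n : ℕ} (b : Fin (n + 1) → ℝ)
    (S : Finset (Profile n)) (p : Profile n → ℝ) (hdist : ValidDist S p)
    (g : Finset (Fin (n + 1)) → Profile n → Fin (n + 1)) (hg : IsChoice n b g)
    (Astar : Finset (Fin (n + 1))) (hopt : OptimalMenu S p g Astar)
    (ubar : ℝ) (hu : ubar = (insert 0 Astar).sup' (Finset.insert_nonempty 0 Astar) b) :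
    (∑ v ∈ S, p v * (v (g Astar v) - (ubar - b (g Astar v))))
      ≤ util S p g (thresh n b ubar) := by
  have h0 : b 0 ≤ ubar := hu ▸ Finset.le_sup' b (Finset.mem_insert_self 0 Astar)
  unfold util
  apply Finset.sum_le_sum
  intro v hv
  apply mul_le_mul_of_nonneg_left _ (hdist.1 v hv)
  set i := g Astar v with hi
  set T := thresh n b ubar with hT
  set j := g T v with hj
  obtain ⟨hjmem, hjmax, -⟩ := hg T v
  obtain ⟨himem, -, -⟩ := hg Astar v
  have hbj : b j ≤ ubar := by
    rcases Finset.mem_insert.mp hjmem with h | h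
    · show b (g T v) ≤ ubar; rw [h]; exact h0
    · exact ((Finset.mem_filter.mp h).2).2
  have himem' : i ∈ insert 0 T := by
    rcases Finset.mem_insert.mp himem with h | h
    · show g Astar v ∈ insert 0 T; rw [h]; exact Finset.mem_insert_self _ _
    · refine Finset.mem_insert_of_mem (Finset.mem_filter.mpr ⟨Finset.mem_univ _, ?_, ?_⟩)
      · intro h0'; exact (hopt.1) (h0' ▸ h)
      · rw [hu]; exact Finset.le_sup' b (Finset.mem_insert_of_mem h)
  have := hjmax i himem'
  linarith
end

section
/- Assume the values v_0, v_1, …, v_n are mutually independent. Then for any threshold t ∈ ℝ, there exists a single (possibly new) action a(t) with bias b_{a(t)} = t and a deterministic (constant) value v_{a(t)} such that f(A_t) ≥ f((A_t ∩ A*) ∪ {a(t)}), where the right-hand side is the principal's utility when the agent chooses from (A_t ∩ A*) ∪ {a(t)} ∪ {0}. -/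
open Finset

/-- Marginal mass of coordinate `i` at value `s`. -/
noncomputable def marg {n : ℕ} (S : Finset (Profile n)) (p : Profile n → ℝ)
    (i : Fin (n + 1)) (s : ℝ) : ℝ :=
  ∑ v ∈ S.filter fun v => v i = s, p v

/-- Block marginals factorize under coordinatewise independence. -/
lemma block_marg {n : ℕ} (S : Finset (Profile n)) (p : Profile n → ℝ)
    (hp1 : ∑ v ∈ S, p v = 1) (hindep : IndepValues S p) :
    ∀ (k : ℕ) (T : Finset (Fin (n + 1))),
      ((Finset.univ : Finset (Fin (n + 1))) \ T).card = k → ∀ m : Profile n,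
      (∑ v ∈ S.filter fun v => ∀ i ∈ T, v i = m i, p v) = ∏ i ∈ T, marg S p i (m i) := by
  intro k
  induction k with
  | zero =>
    intro T hT m
    have hTuniv : T = Finset.univ := by
      have h1 := Finset.card_eq_zero.mp hT
      have h2 := Finset.sdiff_eq_empty_iff_subset.mp h1
      exact Finset.eq_univ_iff_forall.mpr fun i => h2 (Finset.mem_univ i)
    subst hTuniv
    have hfe : S.filter (fun v => ∀ i ∈ (Finset.univ : Finset (Fin (n+1))), v i = m i)
        = S.filter (fun v => v = m) := by
      apply Finset.filter_congr
      intro v _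
      simp [funext_iff]
    rw [hfe]
    simpa [marg] using hindep m
  | succ k ih =>
    intro T hT m
    have hne : ((Finset.univ : Finset (Fin (n + 1))) \ T).Nonempty := by
      rw [← Finset.card_pos, hT]; omega
    obtain ⟨j, hj⟩ := hne
    have hjT : j ∉ T := (Finset.mem_sdiff.mp hj).2
    have hcard : ((Finset.univ : Finset (Fin (n + 1))) \ insert j T).card = k := by
      rw [Finset.sdiff_insert, Finset.card_erase_of_mem hj, hT]
      omega
    have hmaps : ∀ v ∈ S.filter (fun v => ∀ i ∈ T, v i = m i),
        v j ∈ S.image (fun v => v j) :=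
      fun v hv => Finset.mem_image_of_mem _ (Finset.mem_filter.mp hv).1
    rw [← Finset.sum_fiberwise_of_maps_to hmaps p]
    have hfib : ∀ s ∈ S.image (fun v => v j),
        (∑ v ∈ (S.filter (fun v => ∀ i ∈ T, v i = m i)).filter (fun v => v j = s), p v)
          = marg S p j s * ∏ i ∈ T, marg S p i (m i) := by
      intro s _
      rw [Finset.filter_filter]
      have hpred : S.filter (fun v => (∀ i ∈ T, v i = m i) ∧ v j = s)
          = S.filter (fun v => ∀ i ∈ insert j T, v i = Function.update m j s i) := by
        apply Finset.filter_congr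
        intro v _
        constructor
        · rintro ⟨h1, h2⟩ i hi
          rcases Finset.mem_insert.mp hi with rfl | hiT
          · rw [Function.update_self]; exact h2
          · rw [Function.update_of_ne (show i ≠ j from fun h => hjT (h ▸ hiT)) s m]
            exact h1 i hiT
        · intro h
          refine ⟨fun i hi => ?_, ?_⟩
          · have h2 := h i (Finset.mem_insert_of_mem hi)
            rwa [Function.update_of_ne (show i ≠ j from fun hh => hjT (hh ▸ hi)) s m] at h2
          · have h2 := h j (Finset.mem_insert_self j T)
            rwa [Function.update_self] at h2
      rw [hpred, ih (insert j T) hcard (Function.update m j s),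
        Finset.prod_insert hjT, Function.update_self]
      congr 1
      apply Finset.prod_congr rfl
      intro i hiT
      rw [Function.update_of_ne (show i ≠ j from fun h => hjT (h ▸ hiT)) s m]
    rw [Finset.sum_congr rfl hfib, ← Finset.sum_mul]
    have hone : ∑ s ∈ S.image (fun v => v j), marg S p j s = 1 := by
      have := Finset.sum_fiberwise_of_maps_to
        (fun (v : Profile n) (hv : v ∈ S) => Finset.mem_image_of_mem (fun v => v j) hv) p
      simpa [marg, hp1] using this
    rw [hone, one_mul]

/-- Resampling the coordinates in `C` from an independent copy does not change
expectations. -/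
lemma swap_indep {n : ℕ} (S : Finset (Profile n)) (p : Profile n → ℝ)
    (hp1 : ∑ v ∈ S, p v = 1) (hindep : IndepValues S p)
    (C : Finset (Fin (n + 1))) (φ : Profile n → ℝ) :
    ∑ v ∈ S, p v * φ v
      = ∑ v' ∈ S, p v' * ∑ v ∈ S, p v * φ (fun i => if i ∈ C then v' i else v i) := by
  classical
  have hstep1 : ∑ v' ∈ S, p v' * ∑ v ∈ S, p v * φ (fun i => if i ∈ C then v' i else v i)
      = ∑ pr ∈ S ×ˢ S, p pr.1 * p pr.2
          * φ (fun i => if i ∈ C then pr.1 i else pr.2 i) := by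
    rw [Finset.sum_product]
    apply Finset.sum_congr rfl
    intro v' _
    rw [Finset.mul_sum]
    apply Finset.sum_congr rfl
    intro v _
    exact (mul_assoc _ _ _).symm
  set gm : Profile n × Profile n → Profile n :=
    fun pr => fun i => if i ∈ C then pr.1 i else pr.2 i with hgm
  set tt := (S ×ˢ S).image gm with htt
  have hmapsto : ∀ pr ∈ S ×ˢ S, gm pr ∈ tt := fun pr h => Finset.mem_image_of_mem _ h
  have hstep2 : (∑ pr ∈ S ×ˢ S, p pr.1 * p pr.2
          * φ (fun i => if i ∈ C then pr.1 i else pr.2 i))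
      = ∑ m ∈ tt, (∑ v ∈ S.filter fun v => v = m, p v) * φ m := by
    rw [← Finset.sum_fiberwise_of_maps_to hmapsto
      (fun pr => p pr.1 * p pr.2 * φ (fun i => if i ∈ C then pr.1 i else pr.2 i))]
    apply Finset.sum_congr rfl
    intro m hm
    have h1 : (∑ pr ∈ (S ×ˢ S).filter (fun pr => gm pr = m),
          p pr.1 * p pr.2 * φ (fun i => if i ∈ C then pr.1 i else pr.2 i))
        = ∑ pr ∈ (S ×ˢ S).filter (fun pr => gm pr = m), p pr.1 * p pr.2 * φ m := by
      apply Finset.sum_congr rfl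
      intro pr hpr
      have := (Finset.mem_filter.mp hpr).2
      rw [show (fun i => if i ∈ C then pr.1 i else pr.2 i) = m from this]
    rw [h1, ← Finset.sum_mul]
    congr 1
    have hfibeq : (S ×ˢ S).filter (fun pr => gm pr = m)
        = (S.filter fun v => ∀ i ∈ C, v i = m i)
            ×ˢ (S.filter fun v => ∀ i ∈ Finset.univ \ C, v i = m i) := by
      ext pr
      simp only [Finset.mem_filter, Finset.mem_product, Finset.mem_sdiff, Finset.mem_univ,
        true_and]
      constructor
      · rintro ⟨⟨h1, h2⟩, h3⟩
        have h4 := funext_iff.mp h3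
        refine ⟨⟨h1, fun i hi => ?_⟩, ⟨h2, fun i hi => ?_⟩⟩
        · have h5 := h4 i; rwa [show gm pr i = pr.1 i from if_pos hi] at h5
        · have h5 := h4 i; rwa [show gm pr i = pr.2 i from if_neg hi] at h5
      · rintro ⟨⟨h1, h2⟩, h3, h4⟩
        refine ⟨⟨h1, h3⟩, funext fun i => ?_⟩
        by_cases hi : i ∈ C
        · rw [show gm pr i = pr.1 i from if_pos hi]; exact h2 i hi
        · rw [show gm pr i = pr.2 i from if_neg hi]; exact h4 i hi
    rw [hfibeq, Finset.sum_product, ← Finset.sum_mul_sum,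
      block_marg S p hp1 hindep _ C rfl m,
      block_marg S p hp1 hindep _ (Finset.univ \ C) rfl m,
      mul_comm, Finset.prod_sdiff (Finset.subset_univ C)]
    simpa [marg] using (hindep m).symm
  have hsub : S ⊆ tt := by
    intro m hm
    refine Finset.mem_image.mpr ⟨(m, m), Finset.mem_product.mpr ⟨hm, hm⟩, ?_⟩
    funext i
    by_cases hi : i ∈ C
    · exact if_pos hi
    · exact if_neg hi
  have hstep3 : (∑ m ∈ tt, (∑ v ∈ S.filter fun v => v = m, p v) * φ m)
      = ∑ v ∈ S, p v * φ v := by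
    rw [← Finset.sum_subset hsub (fun m hmt hmS => by
      rw [Finset.filter_eq']
      simp [hmS])]
    apply Finset.sum_congr rfl
    intro m hm
    rw [Finset.filter_eq']
    simp [hm]
  exact (hstep1.trans (hstep2.trans hstep3)).symm

/-- Pointwise comparison: the value obtained from the augmented menu
`{0} ∪ B ∪ {a(t)}` (new action with bias `t` and deterministic value `w`)
is at most the value obtained from `A = B ∪ C`, where the coordinates in `C`
are replaced by those of `v'` and `w` is chosen from `v'`. -/
lemma key_pointwise {n : ℕ} (b : Fin (n + 1) → ℝ) (t : ℝ)
    (A B C : Finset (Fin (n + 1)))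
    (hBC : B ∪ C = A) (hd : ∀ j ∈ B, j ∉ C) (h0A : (0 : Fin (n + 1)) ∉ A)
    (hbt : ∀ i ∈ A, b i ≤ t)
    (g : Finset (Fin (n + 1)) → Profile n → Fin (n + 1)) (hg : IsChoice n b g)
    (g' : Finset (Fin (n + 2)) → Profile (n + 1) → Fin (n + 2))
    (hg' : IsChoice (n + 1) (Fin.snoc b t) g')
    (v v' : Profile n) (hv0 : 0 ≤ v 0)
    (w : ℝ)
    (hw : w = (if hne : C.Nonempty then (C.image fun i => v' i + b i).max' (hne.image _)
        else b 0 - 1) - t) :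
    (Fin.snoc v w : Profile (n + 1))
        (g' (insert (Fin.last (n + 1)) (B.image Fin.castSucc)) (Fin.snoc v w))
      ≤ (fun i => if i ∈ C then v' i else v i)
          (g A fun i => if i ∈ C then v' i else v i) := by
  classical
  set m : Profile n := fun i => if i ∈ C then v' i else v i with hm
  set vs : Profile (n + 1) := Fin.snoc v w with hvs
  set A' : Finset (Fin (n + 2)) := insert (Fin.last (n + 1)) (B.image Fin.castSucc) with hA'
  obtain ⟨hkmem, hkmax, hktie⟩ := hg A m
  obtain ⟨hk'mem, hk'max, _⟩ := hg' A' vs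
  set k := g A m with hk
  set k' := g' A' vs with hk'
  have h0C : (0 : Fin (n + 1)) ∉ C := fun hc => h0A (hBC ▸ Finset.mem_union_right B hc)
  have hmv : ∀ j, j ∉ C → m j = v j := fun j hj => if_neg hj
  have hsnb : ∀ j : Fin (n + 1), (Fin.snoc b t : Fin (n + 2) → ℝ) j.castSucc = b j :=
    fun j => Fin.snoc_castSucc ..
  have hsnv : ∀ j : Fin (n + 1), vs j.castSucc = v j := fun j => Fin.snoc_castSucc ..
  have hvlast : vs (Fin.last (n + 1)) = w := Fin.snoc_last ..
  have hblast : (Fin.snoc b t : Fin (n + 2) → ℝ) (Fin.last (n + 1)) = t := Fin.snoc_last ..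
  have hlastA' : Fin.last (n + 1) ∈ insert 0 A' :=
    Finset.mem_insert_of_mem (Finset.mem_insert_self _ _)
  have hcastmem : ∀ j : Fin (n + 1), (j = 0 ∨ j ∈ B) → j.castSucc ∈ insert 0 A' := by
    rintro j (rfl | hjB)
    · rw [Fin.castSucc_zero]; exact Finset.mem_insert_self _ _
    · exact Finset.mem_insert_of_mem
        (Finset.mem_insert_of_mem (Finset.mem_image_of_mem _ hjB))
  have hnotC : ∀ j : Fin (n + 1), (j = 0 ∨ j ∈ B) → j ∉ C := by
    rintro j (rfl | hjB)
    · exact h0C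
    · exact hd j hjB
  have hmemA : ∀ j : Fin (n + 1), (j = 0 ∨ j ∈ B) → j ∈ insert 0 A := by
    rintro j (rfl | hjB)
    · exact Finset.mem_insert_self _ _
    · exact Finset.mem_insert_of_mem (hBC ▸ Finset.mem_union_left C hjB)
  have hkcase : k = 0 ∨ k ∈ B ∨ k ∈ C := by
    rcases Finset.mem_insert.mp hkmem with h | h
    · exact Or.inl h
    · rw [← hBC] at h
      rcases Finset.mem_union.mp h with h | h
      · exact Or.inr (Or.inl h)
      · exact Or.inr (Or.inr h)
  -- utility bound from the augmented menu for original indices in {0} ∪ B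
  have hBub : ∀ j, (j = 0 ∨ j ∈ B) →
      m j + b j ≤ vs k' + (Fin.snoc b t : Fin (n + 2) → ℝ) k' := by
    intro j hj
    have h1 := hk'max j.castSucc (hcastmem j hj)
    rwa [hsnv, hsnb, ← hmv j (hnotC j hj)] at h1
  have hk'case : k' = Fin.last (n + 1)
      ∨ ∃ j : Fin (n + 1), (j = 0 ∨ j ∈ B) ∧ k' = j.castSucc := by
    rcases Finset.mem_insert.mp hk'mem with h | h
    · exact Or.inr ⟨0, Or.inl rfl, by rw [h, Fin.castSucc_zero]⟩
    · rcases Finset.mem_insert.mp h with h | h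
      · exact Or.inl h
      · obtain ⟨j, hj, hje⟩ := Finset.mem_image.mp h
        exact Or.inr ⟨j, Or.inr hj, hje.symm⟩
  rcases hk'case with hlast | ⟨j, hj01, hjc⟩
  · -- new action chosen
    by_cases hne : C.Nonempty
    · obtain ⟨i0, hi0C, hi0⟩ :=
        Finset.mem_image.mp ((C.image fun i => v' i + b i).max'_mem (hne.image _))
      set u := (C.image fun i => v' i + b i).max' (hne.image _) with hu
      have hwu : w = u - t := by rw [hw, dif_pos hne]
      have hi0A : i0 ∈ insert 0 A :=
        Finset.mem_insert_of_mem (hBC ▸ Finset.mem_union_right B hi0C)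
      have hmi0 : m i0 = v' i0 := if_pos hi0C
      have hk'u : vs k' + (Fin.snoc b t : Fin (n + 2) → ℝ) k' = u := by
        rw [hlast, hvlast, hblast, hwu]; ring
      have hub : m k + b k ≤ u := by
        rcases hkcase with hk0 | hkB | hkC
        · exact hk'u ▸ hBub k (Or.inl hk0)
        · exact hk'u ▸ hBub k (Or.inr hkB)
        · have hmk : m k = v' k := if_pos hkC
          rw [hmk]
          exact Finset.le_max' (C.image fun i => v' i + b i) _
            (Finset.mem_image_of_mem _ hkC)
      have hlb : u ≤ m k + b k := by
        have h1 := hkmax i0 hi0A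
        rw [hmi0] at h1
        have h2 : v' i0 + b i0 = u := hi0
        linarith
      have heq : m i0 + b i0 = m k + b k := by rw [hmi0]; linarith [hi0]
      have htie := hktie i0 hi0A heq
      have hbi0 : b i0 ≤ t := hbt i0 (hBC ▸ Finset.mem_union_right B hi0C)
      rw [hlast, hvlast]
      rw [hmi0] at htie
      have h2 : v' i0 + b i0 = u := hi0
      linarith [hwu]
    · exfalso
      have h1 := hBub 0 (Or.inl rfl)
      rw [hlast, hvlast, hblast, hw, dif_neg hne, hmv 0 h0C] at h1
      linarith
  · -- an original action (or the outside option) chosen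
    have hjnC := hnotC j hj01
    have hjA := hmemA j hj01
    have h1 : m j + b j ≤ m k + b k := hkmax j hjA
    have hk'v : vs k' = v j := by rw [hjc, hsnv]
    have hk'b : (Fin.snoc b t : Fin (n + 2) → ℝ) k' = b j := by rw [hjc, hsnb]
    have h2 : m k + b k ≤ m j + b j := by
      rcases hkcase with hk0 | hkB | hkC
      · have h3 := hBub k (Or.inl hk0)
        rwa [hk'v, hk'b, ← hmv j hjnC] at h3
      · have h3 := hBub k (Or.inr hkB)
        rwa [hk'v, hk'b, ← hmv j hjnC] at h3
      · have hne : C.Nonempty := ⟨k, hkC⟩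
        have hmk : m k = v' k := if_pos hkC
        have hku : v' k + b k ≤ (C.image fun i => v' i + b i).max' (hne.image _) :=
          Finset.le_max' (C.image fun i => v' i + b i) _
            (Finset.mem_image_of_mem _ hkC)
        have hlastle := hk'max (Fin.last (n + 1)) hlastA'
        rw [hvlast, hblast, hk'v, hk'b, hw, dif_pos hne] at hlastle
        have hmj := hmv j hjnC
        rw [hmk, hmj]
        linarith
    have heq : m j + b j = m k + b k := le_antisymm h1 h2
    have htie := hktie j hjA heq
    rw [hk'v, ← hmv j hjnC]
    exact htie

/-- **partial derandomization.** Under mutually independent values,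
for any threshold `t` there is a single new action `a(t)` with bias `t` and a
deterministic value `w` such that `f(A_t) ≥ f((A_t ∩ A*) ∪ {a(t)})`.  The
augmented instance lives on `Fin (n+2)`: the original actions are embedded via
`Fin.castSucc` (so the outside option `0` stays at `0`), the new action is
`Fin.last (n+1)` with bias `t` (via `Fin.snoc b t`) and constant value `w`. -/
theorem partial_derandomization {n : ℕ} (b : Fin (n + 1) → ℝ)
    (S : Finset (Profile n)) (p : Profile n → ℝ)
    (hdist : ValidDist S p) (hindep : IndepValues S p)
    (g : Finset (Fin (n + 1)) → Profile n → Fin (n + 1)) (hg : IsChoice n b g)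
    (Astar : Finset (Fin (n + 1))) (hopt : OptimalMenu S p g Astar)
    (t : ℝ) :
    ∃ w : ℝ, ∀ g' : Finset (Fin (n + 2)) → Profile (n + 1) → Fin (n + 2),
      IsChoice (n + 1) (Fin.snoc b t) g' →
        util (S.image fun v => Fin.snoc v w) (fun v' => p fun i => v' i.castSucc) g'
            (insert (Fin.last (n + 1)) ((thresh n b t ∩ Astar).image Fin.castSucc))
          ≤ util S p g (thresh n b t) := by
  classical
  obtain ⟨hp0, hp1, hvnn⟩ := hdist
  set A := thresh n b t with hAdef
  set B := A ∩ Astar with hBdef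
  set C := A \ Astar with hCdef
  have hBC : B ∪ C = A := by
    rw [hBdef, hCdef]; ext i
    simp only [Finset.mem_union, Finset.mem_inter, Finset.mem_sdiff]
    tauto
  have hd : ∀ j ∈ B, j ∉ C := by
    intro j hj hjc
    exact (Finset.mem_sdiff.mp hjc).2 (Finset.mem_inter.mp hj).2
  have h0A : (0 : Fin (n + 1)) ∉ A := by
    rw [hAdef]; simp [thresh]
  have hbt : ∀ i ∈ A, b i ≤ t := by
    intro i hi
    rw [hAdef, thresh, Finset.mem_filter] at hi
    exact hi.2.2
  have hswap := swap_indep S p hp1 hindep C (fun m => m (g A m))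
  have havg : ∃ v0 ∈ S,
      (∑ v ∈ S, p v * (fun m => m (g A m)) (fun i => if i ∈ C then v0 i else v i))
        ≤ util S p g A := by
    by_contra hcon
    push_neg at hcon
    obtain ⟨i1, hi1, hpi1⟩ : ∃ i ∈ S, 0 < p i := by
      by_contra hno; push_neg at hno
      have h0 : ∑ v ∈ S, p v = 0 :=
        Finset.sum_eq_zero fun i hi => le_antisymm (hno i hi) (hp0 i hi)
      rw [hp1] at h0; norm_num at h0
    have hlt : (∑ v' ∈ S, p v' * util S p g A)
        < ∑ v' ∈ S, p v' * ∑ v ∈ S,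
            p v * (fun m => m (g A m)) (fun i => if i ∈ C then v' i else v i) := by
      apply Finset.sum_lt_sum
      · intro i hi; exact mul_le_mul_of_nonneg_left (hcon i hi).le (hp0 i hi)
      · exact ⟨i1, hi1, mul_lt_mul_of_pos_left (hcon i1 hi1) hpi1⟩
    rw [← hswap, ← Finset.sum_mul, hp1, one_mul] at hlt
    exact absurd hlt (by rw [util]; exact lt_irrefl _)
  obtain ⟨v0, hv0S, hv0le⟩ := havg
  refine ⟨(if hne : C.Nonempty then (C.image fun i => v0 i + b i).max' (hne.image _)
    else b 0 - 1) - t, ?_⟩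
  intro g' hg'
  set w : ℝ := (if hne : C.Nonempty then (C.image fun i => v0 i + b i).max' (hne.image _)
    else b 0 - 1) - t with hwdef
  have hinj : ∀ x ∈ S, ∀ y ∈ S,
      (Fin.snoc x w : Profile (n + 1)) = (Fin.snoc y w : Profile (n + 1)) → x = y := by
    intro x _ y _ h
    funext i
    have := congrFun h i.castSucc
    rwa [Fin.snoc_castSucc, Fin.snoc_castSucc] at this
  have himg : util (S.image fun v => Fin.snoc v w) (fun v' => p fun i => v' i.castSucc) g'
      (insert (Fin.last (n + 1)) (B.image Fin.castSucc))
      = ∑ v ∈ S, p v * (Fin.snoc v w : Profile (n + 1))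
          (g' (insert (Fin.last (n + 1)) (B.image Fin.castSucc)) (Fin.snoc v w)) := by
    rw [util, Finset.sum_image hinj]
    apply Finset.sum_congr rfl
    intro v hv
    congr 1
    exact congrArg p (funext fun i => Fin.snoc_castSucc ..)
  rw [himg]
  refine le_trans (Finset.sum_le_sum fun v hv => ?_) hv0le
  exact mul_le_mul_of_nonneg_left
    (key_pointwise b t A B C hBC hd h0A hbt g hg g' hg' v v0 (hvnn v hv 0) w hwdef)
    (hp0 v hv)
end

section
/- The constant 3 in the threshold approximation guarantee is tight: for every c < 3 there exists a delegation instance with mutually independent, finitely supported values and no outside option in which f(A*) > c · f(A_t) for every threshold t ∈ ℝ. -/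
open Finset

/-!
Delegated choice with **no outside option**.  There are `n` actions, indexed by
`Fin n`.  Action `i` has a known bias `b i`; the value profile `v : Fin n → ℝ`
is drawn from a finitely supported distribution with support `S` and probability
mass `p`.  From a nonempty menu `A` the agent picks an action maximizing
`v i + b i`, breaking ties in favor of larger value `v i`.
-/

/-- `g` is a valid agent choice function for biases `b` (no outside option):
from every nonempty menu `A` it picks an agent-utility-maximizing action,
breaking ties in favor of larger value. -/
def IsChoiceN (n : ℕ) (b : Fin n → ℝ)
    (g : Finset (Fin n) → (Fin n → ℝ) → Fin n) : Prop :=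
  ∀ (A : Finset (Fin n)) (v : Fin n → ℝ), A.Nonempty →
    g A v ∈ A ∧
    (∀ j ∈ A, v j + b j ≤ v (g A v) + b (g A v)) ∧
    (∀ j ∈ A, v j + b j = v (g A v) + b (g A v) → v j ≤ v (g A v))

/-- The principal's expected utility `f(A)` from menu `A`. -/
def utilN {n : ℕ} (S : Finset (Fin n → ℝ)) (p : (Fin n → ℝ) → ℝ)
    (g : Finset (Fin n) → (Fin n → ℝ) → Fin n) (A : Finset (Fin n)) : ℝ :=
  ∑ v ∈ S, p v * v (g A v)

/-- The threshold menu `A_t = {i : b i ≤ t}`. -/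
noncomputable def threshN (n : ℕ) (b : Fin n → ℝ) (t : ℝ) : Finset (Fin n) :=
  Finset.univ.filter fun i => b i ≤ t

/-- `S, p` is a finitely supported probability distribution over nonnegative value
profiles. -/
def ValidDistN {n : ℕ} (S : Finset (Fin n → ℝ)) (p : (Fin n → ℝ) → ℝ) : Prop :=
  (∀ v ∈ S, 0 ≤ p v) ∧ (∑ v ∈ S, p v = 1) ∧ ∀ v ∈ S, ∀ i, 0 ≤ v i

/-- The coordinates `v 1, …, v n` are mutually independent: the joint mass of
every profile is the product of the marginal masses of its coordinates. -/
def IndepValuesN {n : ℕ} (S : Finset (Fin n → ℝ)) (p : (Fin n → ℝ) → ℝ) : Prop :=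
  ∀ w : Fin n → ℝ,
    (∑ v ∈ S.filter fun v => v = w, p v)
      = ∏ i : Fin n, ∑ v ∈ S.filter fun v => v i = w i, p v

namespace TT

/-- biases -/
noncomputable def bb (ε : ℝ) : Fin 5 → ℝ :=
  ![0, ε⁻¹ - 1, ε⁻¹ - 1 + ε^2, ε⁻¹ - 3*ε^2, ε⁻¹ - 5*ε^2/2]

/-- profiles -/
noncomputable def prof (ε : ℝ) (s t : Bool) : Fin 5 → ℝ :=
  ![if s then ε⁻¹ else 0, 1 + ε^2, 1 - 3*ε^2, 5*ε^2, if t then ε⁻¹ else 0]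

noncomputable def SS (ε : ℝ) : Finset (Fin 5 → ℝ) :=
  {prof ε true true, prof ε true false, prof ε false true, prof ε false false}

noncomputable def pp (ε : ℝ) (v : Fin 5 → ℝ) : ℝ :=
  (if v 0 = ε⁻¹ then ε else 1 - ε) * (if v 4 = ε⁻¹ then ε else 1 - ε)

variable {ε : ℝ}

lemma einv_ne (hε : 0 < ε) : ε⁻¹ ≠ 0 := inv_ne_zero (ne_of_gt hε)

lemma einv_ge (hε : 0 < ε) (h10 : ε ≤ 1/10) : (10:ℝ) ≤ ε⁻¹ := by
  rw [show (10:ℝ) = (1/10)⁻¹ by norm_num]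
  exact inv_anti₀ hε h10

lemma prof_ne (hε : 0 < ε) (s t s' t' : Bool) (h : (s,t) ≠ (s',t')) :
    prof ε s t ≠ prof ε s' t' := by
  intro hEq
  have h0 : prof ε s t 0 = prof ε s' t' 0 := by rw [hEq]
  have h4 : prof ε s t 4 = prof ε s' t' 4 := by rw [hEq]
  simp only [prof, Matrix.cons_val_zero] at h0
  have h4' : (if t then ε⁻¹ else 0) = (if t' then ε⁻¹ else 0) := by
    simpa [prof] using h4
  have he := einv_ne hε
  clear hEq h4
  have hs : s = s' := by cases s <;> cases s' <;> simp_all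
  have ht : t = t' := by cases t <;> cases t' <;> simp_all
  exact h (by rw [hs, ht])

lemma prof0 (s t : Bool) : prof ε s t 0 = if s then ε⁻¹ else 0 := rfl
lemma prof1 (s t : Bool) : prof ε s t 1 = 1 + ε^2 := rfl
lemma prof2 (s t : Bool) : prof ε s t 2 = 1 - 3*ε^2 := rfl
lemma prof3 (s t : Bool) : prof ε s t 3 = 5*ε^2 := rfl
lemma prof4 (s t : Bool) : prof ε s t 4 = if t then ε⁻¹ else 0 := rfl
lemma bb0 : bb ε 0 = 0 := rfl
lemma bb1 : bb ε 1 = ε⁻¹ - 1 := rfl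
lemma bb2 : bb ε 2 = ε⁻¹ - 1 + ε^2 := rfl
lemma bb3 : bb ε 3 = ε⁻¹ - 3*ε^2 := rfl
lemma bb4 : bb ε 4 = ε⁻¹ - 5*ε^2/2 := rfl

lemma sum_SS (hε : 0 < ε) (f : (Fin 5 → ℝ) → ℝ) :
    ∑ v ∈ SS ε, f v = f (prof ε true true) + f (prof ε true false)
      + f (prof ε false true) + f (prof ε false false) := by
  rw [SS, Finset.sum_insert (by
      simp [prof_ne hε true true true false (by simp),
        prof_ne hε true true false true (by simp),
        prof_ne hε true true false false (by simp)]),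
    Finset.sum_insert (by
      simp [prof_ne hε true false false true (by simp),
        prof_ne hε true false false false (by simp)]),
    Finset.sum_pair (prof_ne hε false true false false (by simp))]
  ring

lemma pp_prof (hε : 0 < ε) (s t : Bool) :
    pp ε (prof ε s t) = (if s then ε else 1-ε) * (if t then ε else 1-ε) := by
  have he := einv_ne hε
  cases s <;> cases t <;> simp [pp, prof, he, hε.ne, hε.ne']

end TT
namespace TT2
open TT Finset
variable {ε : ℝ}

lemma prof_eq_iff (hε : 0 < ε) {s t s' t' : Bool} :
    prof ε s t = prof ε s' t' ↔ s = s' ∧ t = t' := by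
  constructor
  · intro h
    by_contra hc
    exact prof_ne hε s t s' t' (by simpa [Prod.ext_iff] using hc) h
  · rintro ⟨rfl, rfl⟩; rfl

lemma sum_pp (hε : 0 < ε) : ∑ v ∈ SS ε, pp ε v = 1 := by
  rw [sum_SS hε]
  simp only [pp_prof hε]
  simp; ring

lemma mem_SS_iff (hε : 0 < ε) (v : Fin 5 → ℝ) :
    v ∈ SS ε ↔ ∃ s t, v = prof ε s t := by
  simp only [SS, Finset.mem_insert, Finset.mem_singleton]
  constructor
  · rintro (h|h|h|h) <;> exact ⟨_, _, h⟩
  · rintro ⟨s, t, rfl⟩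
    cases s <;> cases t <;> simp

lemma valid (hε : 0 < ε) (h10 : ε ≤ 1/10) : ValidDistN (SS ε) (pp ε) := by
  refine ⟨fun v _ => ?_, sum_pp hε, fun v hv i => ?_⟩
  · unfold pp
    have h1 : (0:ℝ) ≤ ε := le_of_lt hε
    have h2 : (0:ℝ) ≤ 1 - ε := by linarith
    split_ifs <;> positivity
  · obtain ⟨s, t, rfl⟩ := (mem_SS_iff hε v).mp hv
    have hi : (0:ℝ) ≤ ε⁻¹ := le_of_lt (inv_pos.mpr hε)
    have hsq : ε^2 ≤ 1/100 := by nlinarith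
    fin_cases i
    · show (0:ℝ) ≤ prof ε s t 0
      rw [prof0]; cases s <;> simp [hi]
    · show (0:ℝ) ≤ prof ε s t 1
      rw [prof1]; positivity
    · show (0:ℝ) ≤ prof ε s t 2
      rw [prof2]; nlinarith
    · show (0:ℝ) ≤ prof ε s t 3
      rw [prof3]; positivity
    · show (0:ℝ) ≤ prof ε s t 4
      rw [prof4]; cases t <;> simp [hi]

lemma both_zero (i : Fin 5) (w : Fin 5 → ℝ) (hi : ∀ v ∈ SS ε, ¬ v i = w i) :
    (∑ v ∈ (SS ε).filter fun v => v = w, pp ε v)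
      = ∏ j : Fin 5, ∑ v ∈ (SS ε).filter fun v => v j = w j, pp ε v := by
  have hL : ((SS ε).filter fun v => v = w) = ∅ :=
    Finset.filter_eq_empty_iff.mpr (fun v hv hvw => hi v hv (by rw [hvw]))
  have hF : ((SS ε).filter fun v => v i = w i) = ∅ :=
    Finset.filter_eq_empty_iff.mpr hi
  rw [hL, Finset.prod_eq_zero (Finset.mem_univ i) (by rw [hF]; simp)]
  simp

lemma indep (hε : 0 < ε) : IndepValuesN (SS ε) (pp ε) := by
  have he := einv_ne hε
  have he' : (0:ℝ) ≠ ε⁻¹ := Ne.symm he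
  intro w
  rcases eq_or_ne (w 1) (1 + ε^2) with h1 | h1
  case inr =>
    refine both_zero 1 w (fun v hv hv1 => h1 ?_)
    obtain ⟨s, t, rfl⟩ := (mem_SS_iff hε v).mp hv
    rw [← hv1]; simp [prof]
  rcases eq_or_ne (w 2) (1 - 3*ε^2) with h2 | h2
  case inr =>
    refine both_zero 2 w (fun v hv hv2 => h2 ?_)
    obtain ⟨s, t, rfl⟩ := (mem_SS_iff hε v).mp hv
    rw [← hv2]; simp [prof]
  rcases eq_or_ne (w 3) (5*ε^2) with h3 | h3
  case inr =>
    refine both_zero 3 w (fun v hv hv3 => h3 ?_)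
    obtain ⟨s, t, rfl⟩ := (mem_SS_iff hε v).mp hv
    rw [← hv3]; simp [prof]
  rcases Classical.em (w 0 = ε⁻¹ ∨ w 0 = 0) with h0 | h0
  case inr =>
    push_neg at h0
    refine both_zero 0 w (fun v hv hv0 => ?_)
    obtain ⟨s, t, rfl⟩ := (mem_SS_iff hε v).mp hv
    cases s <;> simp [prof] at hv0
    · exact h0.2 hv0.symm
    · exact h0.1 hv0.symm
  rcases Classical.em (w 4 = ε⁻¹ ∨ w 4 = 0) with h4 | h4
  case inr =>
    push_neg at h4
    refine both_zero 4 w (fun v hv hv4 => ?_)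
    obtain ⟨s, t, rfl⟩ := (mem_SS_iff hε v).mp hv
    cases t <;> simp [prof] at hv4
    · exact h4.2 hv4.symm
    · exact h4.1 hv4.symm
  -- now w = prof ε s t for suitable s t
  have hw : ∃ s t, w = prof ε s t := by
    rcases h0 with h0 | h0 <;> rcases h4 with h4 | h4
    · exact ⟨true, true, by funext i; fin_cases i <;> simp [prof, h0, h1, h2, h3, h4]⟩
    · exact ⟨true, false, by funext i; fin_cases i <;> simp [prof, h0, h1, h2, h3, h4]⟩
    · exact ⟨false, true, by funext i; fin_cases i <;> simp [prof, h0, h1, h2, h3, h4]⟩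
    · exact ⟨false, false, by funext i; fin_cases i <;> simp [prof, h0, h1, h2, h3, h4]⟩
  obtain ⟨s, t, rfl⟩ := hw
  rw [Fin.prod_univ_five]
  simp only [Finset.sum_filter]
  rw [sum_SS hε (f := fun v => if v = prof ε s t then pp ε v else 0),
    sum_SS hε, sum_SS hε, sum_SS hε, sum_SS hε, sum_SS hε]
  cases s <;> cases t <;>
    · simp only [prof_eq_iff hε, prof0, prof1, prof2, prof3, prof4, pp_prof hε]
      norm_num [he, he']
      ring

end TT2
namespace TT3
open TT TT2 Finset
variable {ε : ℝ} {g : Finset (Fin 5) → (Fin 5 → ℝ) → Fin 5}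

def A0 : Finset (Fin 5) := {0, 2, 4}

lemma choice_eq (hg : IsChoiceN 5 (bb ε) g) {A : Finset (Fin 5)} {v : Fin 5 → ℝ}
    {j : Fin 5} (hj : j ∈ A)
    (h : ∀ k ∈ A, k ≠ j → v k + bb ε k < v j + bb ε j) : g A v = j := by
  obtain ⟨hmem, hmax, -⟩ := hg A v ⟨j, hj⟩
  by_contra hne
  exact absurd (hmax j hj) (not_le.mpr (h _ hmem hne))

lemma util_M1 (hε : 0 < ε) (h10 : ε ≤ 1/10) (hg : IsChoiceN 5 (bb ε) g) :
    utilN (SS ε) (pp ε) g {0} = 1 := by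
  have hch : ∀ s t, g {0} (prof ε s t) = (0 : Fin 5) := fun s t =>
    choice_eq hg (by simp) (by
      intro k hk hkne
      fin_cases hk
      exact absurd rfl hkne)
  unfold utilN
  rw [sum_SS hε]
  rw [hch, hch, hch, hch]
  simp only [pp_prof hε, prof0, if_true, if_false]
  have h1 : ε * ε⁻¹ = 1 := mul_inv_cancel₀ hε.ne'
  norm_num
  nlinarith [h1]

lemma util_M2 (hε : 0 < ε) (h10 : ε ≤ 1/10) (hg : IsChoiceN 5 (bb ε) g) :
    utilN (SS ε) (pp ε) g {0, 1} = 1 + ε^2 := by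
  have he10 := einv_ge hε h10
  have hsq : ε^2 ≤ 1/100 := by nlinarith
  have hd : 0 < ε^2 := by positivity
  have hch : ∀ s t, g {0, 1} (prof ε s t) = (1 : Fin 5) := by
    intro s t
    refine choice_eq hg (by simp) ?_
    intro k hk hkne
    fin_cases hk
    · show prof ε s t 0 + bb ε 0 < prof ε s t 1 + bb ε 1
      rw [prof0, prof1, bb0, bb1]
      cases s <;> simp <;> linarith
    · exact absurd rfl hkne
  unfold utilN
  rw [sum_SS hε]
  rw [hch, hch, hch, hch]
  simp only [pp_prof hε, prof1, if_true, if_false]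
  norm_num
  ring

lemma util_M3 (hε : 0 < ε) (h10 : ε ≤ 1/10) (hg : IsChoiceN 5 (bb ε) g) :
    utilN (SS ε) (pp ε) g {0, 1, 2} = 1 + ε^2 := by
  have he10 := einv_ge hε h10
  have hsq : ε^2 ≤ 1/100 := by nlinarith
  have hd : 0 < ε^2 := by positivity
  have hch : ∀ s t, g {0, 1, 2} (prof ε s t) = (1 : Fin 5) := by
    intro s t
    refine choice_eq hg (by simp) ?_
    intro k hk hkne
    fin_cases hk
    · show prof ε s t 0 + bb ε 0 < prof ε s t 1 + bb ε 1
      rw [prof0, prof1, bb0, bb1]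
      cases s <;> simp <;> linarith
    · exact absurd rfl hkne
    · show prof ε s t 2 + bb ε 2 < prof ε s t 1 + bb ε 1
      rw [prof2, prof1, bb2, bb1]
      linarith
  unfold utilN
  rw [sum_SS hε]
  rw [hch, hch, hch, hch]
  simp only [pp_prof hε, prof1, if_true, if_false]
  norm_num
  ring

lemma util_M4 (hε : 0 < ε) (h10 : ε ≤ 1/10) (hg : IsChoiceN 5 (bb ε) g) :
    utilN (SS ε) (pp ε) g {0, 1, 2, 3} = 5*ε^2 := by
  have he10 := einv_ge hε h10
  have hsq : ε^2 ≤ 1/100 := by nlinarith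
  have hd : 0 < ε^2 := by positivity
  have hch : ∀ s t, g {0, 1, 2, 3} (prof ε s t) = (3 : Fin 5) := by
    intro s t
    refine choice_eq hg (by simp) ?_
    intro k hk hkne
    fin_cases hk
    · show prof ε s t 0 + bb ε 0 < prof ε s t 3 + bb ε 3
      rw [prof0, prof3, bb0, bb3]
      cases s <;> simp <;> linarith
    · show prof ε s t 1 + bb ε 1 < prof ε s t 3 + bb ε 3
      rw [prof1, prof3, bb1, bb3]
      linarith
    · show prof ε s t 2 + bb ε 2 < prof ε s t 3 + bb ε 3
      rw [prof2, prof3, bb2, bb3]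
      linarith
    · exact absurd rfl hkne
  unfold utilN
  rw [sum_SS hε]
  rw [hch, hch, hch, hch]
  simp only [pp_prof hε, prof3, if_true, if_false]
  norm_num
  ring

lemma util_M5 (hε : 0 < ε) (h10 : ε ≤ 1/10) (hg : IsChoiceN 5 (bb ε) g) :
    utilN (SS ε) (pp ε) g Finset.univ ≤ 1 + 5*ε^2 := by
  have he10 := einv_ge hε h10
  have hsq : ε^2 ≤ 1/100 := by nlinarith
  have hd : 0 < ε^2 := by positivity
  have hchT : ∀ s, g Finset.univ (prof ε s true) = (4 : Fin 5) := by
    intro s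
    refine choice_eq hg (by simp) ?_
    intro k hk hkne
    fin_cases k
    · show prof ε s true 0 + bb ε 0 < prof ε s true 4 + bb ε 4
      rw [prof0, prof4, bb0, bb4]
      cases s <;> simp <;> linarith
    · show prof ε s true 1 + bb ε 1 < prof ε s true 4 + bb ε 4
      rw [prof1, prof4, bb1, bb4]; simp; linarith
    · show prof ε s true 2 + bb ε 2 < prof ε s true 4 + bb ε 4
      rw [prof2, prof4, bb2, bb4]; simp; linarith
    · show prof ε s true 3 + bb ε 3 < prof ε s true 4 + bb ε 4
      rw [prof3, prof4, bb3, bb4]; simp; linarith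
    · exact absurd rfl hkne
  have hchF : ∀ s, g Finset.univ (prof ε s false) = (3 : Fin 5) := by
    intro s
    refine choice_eq hg (by simp) ?_
    intro k hk hkne
    fin_cases k
    · show prof ε s false 0 + bb ε 0 < prof ε s false 3 + bb ε 3
      rw [prof0, prof3, bb0, bb3]
      cases s <;> simp <;> linarith
    · show prof ε s false 1 + bb ε 1 < prof ε s false 3 + bb ε 3
      rw [prof1, prof3, bb1, bb3]; linarith
    · show prof ε s false 2 + bb ε 2 < prof ε s false 3 + bb ε 3
      rw [prof2, prof3, bb2, bb3]; linarith
    · exact absurd rfl hkne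
    · show prof ε s false 4 + bb ε 4 < prof ε s false 3 + bb ε 3
      rw [prof4, prof3, bb4, bb3]; simp; linarith
  unfold utilN
  rw [sum_SS hε]
  rw [hchT, hchF, hchT, hchF]
  simp only [pp_prof hε, prof3, prof4, if_true, if_false]
  norm_num
  have h1 : ε * ε⁻¹ = 1 := mul_inv_cancel₀ hε.ne'
  have e2 : ε * ε * ε⁻¹ = ε := by rw [mul_assoc, h1, mul_one]
  have e3 : (1 - ε) * ε * ε⁻¹ = 1 - ε := by rw [mul_assoc, h1, mul_one]
  nlinarith [e2, e3, hd, hε, h10, hsq]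

lemma util_A0 (hε : 0 < ε) (h10 : ε ≤ 1/10) (hg : IsChoiceN 5 (bb ε) g) :
    3 - 4*ε ≤ utilN (SS ε) (pp ε) g A0 := by
  have he10 := einv_ge hε h10
  have hsq : ε^2 ≤ 1/100 := by nlinarith
  have hd : 0 < ε^2 := by positivity
  have hchT : ∀ s, g A0 (prof ε s true) = (4 : Fin 5) := by
    intro s
    refine choice_eq hg (by simp [A0]) ?_
    intro k hk hkne
    fin_cases hk
    · show prof ε s true 0 + bb ε 0 < prof ε s true 4 + bb ε 4
      rw [prof0, prof4, bb0, bb4]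
      cases s <;> simp <;> linarith
    · show prof ε s true 2 + bb ε 2 < prof ε s true 4 + bb ε 4
      rw [prof2, prof4, bb2, bb4]; simp; linarith
    · exact absurd rfl hkne
  have hchTF : g A0 (prof ε true false) = (0 : Fin 5) := by
    refine choice_eq hg (by simp [A0]) ?_
    intro k hk hkne
    fin_cases hk
    · exact absurd rfl hkne
    · show prof ε true false 2 + bb ε 2 < prof ε true false 0 + bb ε 0
      rw [prof2, prof0, bb2, bb0]; simp; linarith
    · show prof ε true false 4 + bb ε 4 < prof ε true false 0 + bb ε 0
      rw [prof4, prof0, bb4, bb0]; simp; linarith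
  have hchFF : g A0 (prof ε false false) = (2 : Fin 5) := by
    refine choice_eq hg (by simp [A0]) ?_
    intro k hk hkne
    fin_cases hk
    · show prof ε false false 0 + bb ε 0 < prof ε false false 2 + bb ε 2
      rw [prof0, prof2, bb0, bb2]; simp; linarith
    · exact absurd rfl hkne
    · show prof ε false false 4 + bb ε 4 < prof ε false false 2 + bb ε 2
      rw [prof4, prof2, bb4, bb2]; simp; linarith
  unfold utilN
  rw [sum_SS hε]
  rw [hchT, hchTF, hchT, hchFF]
  simp only [pp_prof hε, prof0, prof2, prof4, if_true, if_false]
  norm_num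
  have h1 : ε * ε⁻¹ = 1 := mul_inv_cancel₀ hε.ne'
  have e2 : ε * ε * ε⁻¹ = ε := by rw [mul_assoc, h1, mul_one]
  have e3 : (1 - ε) * ε * ε⁻¹ = 1 - ε := by rw [mul_assoc, h1, mul_one]
  have e4 : ε * (1 - ε) * ε⁻¹ = 1 - ε := by rw [mul_comm ε (1-ε), mul_assoc, h1, mul_one]
  nlinarith [e2, e3, e4, hd, hε, h10, hsq, sq_nonneg (1-ε)]

lemma utilN_nonneg (hε : 0 < ε) (h10 : ε ≤ 1/10) (A : Finset (Fin 5)) :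
    0 ≤ utilN (SS ε) (pp ε) g A := by
  refine Finset.sum_nonneg fun v hv => mul_nonneg ((valid hε h10).1 v hv)
    ((valid hε h10).2.2 v hv _)

lemma thresh_eq (hε : 0 < ε) (h10 : ε ≤ 1/10) (t : ℝ) (hne : (threshN 5 (bb ε) t).Nonempty) :
    threshN 5 (bb ε) t = {0} ∨ threshN 5 (bb ε) t = {0, 1} ∨
    threshN 5 (bb ε) t = {0, 1, 2} ∨ threshN 5 (bb ε) t = {0, 1, 2, 3} ∨
    threshN 5 (bb ε) t = Finset.univ := by
  have he10 := einv_ge hε h10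
  have hsq : ε^2 ≤ 1/100 := by nlinarith
  have hd : 0 < ε^2 := by positivity
  have hbb : ∀ i : Fin 5, (0:ℝ) ≤ bb ε i := by
    intro i
    fin_cases i
    · show (0:ℝ) ≤ bb ε 0
      rw [bb0]
    · show (0:ℝ) ≤ bb ε 1
      rw [bb1]; linarith
    · show (0:ℝ) ≤ bb ε 2
      rw [bb2]; linarith
    · show (0:ℝ) ≤ bb ε 3
      rw [bb3]; linarith
    · show (0:ℝ) ≤ bb ε 4
      rw [bb4]; linarith
  have ht0 : 0 ≤ t := by
    obtain ⟨i, hi⟩ := hne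
    rw [threshN, Finset.mem_filter] at hi
    exact le_trans (hbb i) hi.2
  rcases lt_or_ge t (ε⁻¹ - 1) with h1 | h1
  · refine Or.inl (Finset.ext fun i => ?_)
    fin_cases i <;>
      simp [threshN, bb0, bb1, bb2, bb3, bb4, Fin.ext_iff] <;>
      first
        | linarith
        | exact iff_of_false (by linarith) (by decide)
        | exact iff_of_true (by linarith) (by decide)
  rcases lt_or_ge t (ε⁻¹ - 1 + ε^2) with h2 | h2
  · refine Or.inr (Or.inl (Finset.ext fun i => ?_))
    fin_cases i <;>
      simp [threshN, bb0, bb1, bb2, bb3, bb4, Fin.ext_iff] <;>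
      first
        | linarith
        | exact iff_of_false (by linarith) (by decide)
        | exact iff_of_true (by linarith) (by decide)
  rcases lt_or_ge t (ε⁻¹ - 3*ε^2) with h3 | h3
  · refine Or.inr (Or.inr (Or.inl (Finset.ext fun i => ?_)))
    fin_cases i <;>
      simp [threshN, bb0, bb1, bb2, bb3, bb4, Fin.ext_iff] <;>
      first
        | linarith
        | exact iff_of_false (by linarith) (by decide)
        | exact iff_of_true (by linarith) (by decide)
  rcases lt_or_ge t (ε⁻¹ - 5*ε^2/2) with h4 | h4
  · refine Or.inr (Or.inr (Or.inr (Or.inl (Finset.ext fun i => ?_))))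
    fin_cases i <;>
      simp [threshN, bb0, bb1, bb2, bb3, bb4, Fin.ext_iff] <;>
      first
        | linarith
        | exact iff_of_false (by linarith) (by decide)
        | exact iff_of_true (by linarith) (by decide)
  · refine Or.inr (Or.inr (Or.inr (Or.inr (Finset.ext fun i => ?_))))
    fin_cases i <;>
      simp [threshN, bb0, bb1, bb2, bb3, bb4, Fin.ext_iff] <;>
      first
        | linarith
        | exact iff_of_false (by linarith) (by decide)
        | exact iff_of_true (by linarith) (by decide)

end TT3

/-- **tightness of the 3-approximation.** For every `c < 3` there is
a delegation instance with mutually independent, finitely supported values and no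
outside option in which `f(A*) > c · f(A_t)` for every (nonempty) threshold menu. -/


theorem three_approximation_tight (c : ℝ) (hc : c < 3) :
    ∃ (n : ℕ) (b : Fin n → ℝ) (S : Finset (Fin n → ℝ)) (p : (Fin n → ℝ) → ℝ),
      ValidDistN S p ∧ IndepValuesN S p ∧
      ∀ g : Finset (Fin n) → (Fin n → ℝ) → Fin n, IsChoiceN n b g →
        ∃ Astar : Finset (Fin n), Astar.Nonempty ∧
          (∀ A : Finset (Fin n), A.Nonempty → utilN S p g A ≤ utilN S p g Astar) ∧
          ∀ t : ℝ, (threshN n b t).Nonempty →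
            c * utilN S p g (threshN n b t) < utilN S p g Astar := by
  classical
  set ε : ℝ := min (1/10) ((3 - c)/20) with hεdef
  have hε : 0 < ε := lt_min (by norm_num) (by linarith)
  have h10 : ε ≤ 1/10 := min_le_left _ _
  have hc20 : c ≤ 3 - 20*ε := by
    have h := min_le_right (1/10 : ℝ) ((3 - c)/20)
    rw [← hεdef] at h
    linarith
  refine ⟨5, TT.bb ε, TT.SS ε, TT.pp ε, TT2.valid hε h10, TT2.indep hε, ?_⟩
  intro g hg
  obtain ⟨Astar, hmem, hmax⟩ := Finset.exists_max_image
    ((Finset.univ : Finset (Finset (Fin 5))).filter fun A => A.Nonempty)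
    (utilN (TT.SS ε) (TT.pp ε) g)
    ⟨TT3.A0, by simp [TT3.A0, Finset.filter_nonempty_iff]⟩
  have hmemA0 : TT3.A0 ∈ (Finset.univ : Finset (Finset (Fin 5))).filter fun A => A.Nonempty := by
    simp [TT3.A0, Finset.filter_nonempty_iff]
  refine ⟨Astar, (Finset.mem_filter.mp hmem).2, fun A hA => hmax A (by simp [hA]), ?_⟩
  intro t ht
  have hA0 : 3 - 4*ε ≤ utilN (TT.SS ε) (TT.pp ε) g Astar :=
    le_trans (TT3.util_A0 hε h10 hg) (hmax _ hmemA0)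
  have hthle : utilN (TT.SS ε) (TT.pp ε) g (threshN 5 (TT.bb ε) t) ≤ 1 + 5*ε^2 := by
    have hsq : ε^2 ≤ 1/100 := by nlinarith
    rcases TT3.thresh_eq hε h10 t ht with h | h | h | h | h <;> rw [h]
    · rw [TT3.util_M1 hε h10 hg]; nlinarith
    · rw [TT3.util_M2 hε h10 hg]; nlinarith
    · rw [TT3.util_M3 hε h10 hg]; nlinarith
    · rw [TT3.util_M4 hε h10 hg]; nlinarith
    · exact TT3.util_M5 hε h10 hg
  have hthnn : 0 ≤ utilN (TT.SS ε) (TT.pp ε) g (threshN 5 (TT.bb ε) t) :=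
    TT3.utilN_nonneg hε h10 _
  rcases le_or_gt c 0 with hc0 | hc0
  · have : c * utilN (TT.SS ε) (TT.pp ε) g (threshN 5 (TT.bb ε) t) ≤ 0 :=
      mul_nonpos_of_nonpos_of_nonneg hc0 hthnn
    nlinarith
  · have h1 : c * utilN (TT.SS ε) (TT.pp ε) g (threshN 5 (TT.bb ε) t)
        ≤ c * (1 + 5*ε^2) := by nlinarith
    nlinarith
end

section
/- For any menu A ⊆ Ω and any i ∈ A ∪ {0}, let A^i = E[v_i · 1[g(A,v) = i]] denote the contribution of action i to f(A). Then the threshold set A_{b_i} = {j ∈ Ω : b_j ≤ b_i} satisfies f(A_{b_i}) ≥ A^i. (This holds for arbitrary, possibly correlated, value distributions and a possibly randomized outside option.) -/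
open Finset

/-- **single-action lemma.** For any menu `A ⊆ Ω` and any
`i ∈ A ∪ {0}`, the threshold menu `A_{b i}` secures the contribution
`A^i = E[v i · 1[g(A,v) = i]]` of action `i` to `f(A)`.  This holds for
arbitrary, possibly correlated value distributions and a possibly randomized
outside option. -/
theorem threshold_secures_single_action {n : ℕ} (b : Fin (n + 1) → ℝ)
    (S : Finset (Profile n)) (p : Profile n → ℝ) (hdist : ValidDist S p)
    (g : Finset (Fin (n + 1)) → Profile n → Fin (n + 1)) (hg : IsChoice n b g)
    (A : Finset (Fin (n + 1))) (hA : (0 : Fin (n + 1)) ∉ A)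
    (i : Fin (n + 1)) (hi : i ∈ insert 0 A) :
    (∑ v ∈ S.filter fun v => g A v = i, p v * v i)
      ≤ util S p g (thresh n b (b i)) := by
  obtain ⟨hp, _, hv⟩ := hdist
  set T := thresh n b (b i) with hT
  -- pointwise key fact: if g A v = i then v i ≤ v (g T v)
  have key : ∀ v ∈ S, g A v = i → v i ≤ v (g T v) := by
    intro v _ hgv
    obtain ⟨hmem, hmax, htie⟩ := hg T v
    have hiT : i ∈ insert 0 T := by
      rcases eq_or_ne i 0 with h0 | h0
      · simp [h0]
      · exact Finset.mem_insert_of_mem (by simp [hT, thresh, h0])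
    have h1 : v i + b i ≤ v (g T v) + b (g T v) := hmax i hiT
    rcases Finset.mem_insert.mp hmem with hj0 | hjT
    · -- g T v = 0
      rcases eq_or_ne i 0 with h0 | h0
      · rw [hj0, ← h0]
      · -- use the A menu: v 0 + b 0 ≤ v i + b i
        obtain ⟨_, hmaxA, _⟩ := hg A v
        have h2 : v 0 + b 0 ≤ v i + b i := by
          have := hmaxA 0 (Finset.mem_insert_self 0 A)
          rwa [hgv] at this
        rw [hj0] at h1 ⊢
        have heq : v i + b i = v 0 + b 0 := le_antisymm h1 h2
        have := htie i hiT (by rw [heq, ← hj0])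
        rwa [hj0] at this
    · -- g T v ∈ T, so b (g T v) ≤ b i
      have hb : b (g T v) ≤ b i := by
        have := Finset.mem_filter.mp hjT
        exact this.2.2
      linarith
  calc (∑ v ∈ S.filter fun v => g A v = i, p v * v i)
      ≤ ∑ v ∈ S.filter fun v => g A v = i, p v * v (g T v) := by
        apply Finset.sum_le_sum
        intro v hvmem
        obtain ⟨hvS, hgv⟩ := Finset.mem_filter.mp hvmem
        exact mul_le_mul_of_nonneg_left (key v hvS hgv) (hp v hvS)
    _ ≤ ∑ v ∈ S, p v * v (g T v) := by
        apply Finset.sum_le_sum_of_subset_of_nonneg (Finset.filter_subset _ _)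
        intro v hvS _
        have hm := (hg T v).1
        exact mul_nonneg (hp v hvS) (hv v hvS _)
    _ = util S p g T := rfl
end

section
/- For any delegation instance (with possibly randomized outside option), f(A*) = Σ_{i ∈ A* ∪ {0}} E[v_i · 1[g(A*,v) = i]] ≤ Σ_{i ∈ A* ∪ {0}} f(A_{b_i}); consequently there exists a threshold t with f(A_t) ≥ f(A*)/(|A*| + 1), so the best threshold set is an (n+1)-approximation to the optimal delegation set. -/
open Finset

/-- `f(A*)` is the sum over `i ∈ A* ∪ {0}` of the contributions
`E[v i · 1[g(A*,v) = i]]`, each of which is at most `f(A_{b i})`; consequently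
some threshold menu obtains at least `f(A*)/(|A*| + 1)`, so the best threshold
is an `(n+1)`-approximation.  This holds for arbitrary (possibly randomized)
outside options. -/
theorem threshold_n_plus_one_approximation {n : ℕ} (b : Fin (n + 1) → ℝ)
    (S : Finset (Profile n)) (p : Profile n → ℝ) (hdist : ValidDist S p)
    (g : Finset (Fin (n + 1)) → Profile n → Fin (n + 1)) (hg : IsChoice n b g)
    (Astar : Finset (Fin (n + 1))) (hopt : OptimalMenu S p g Astar) :
    (util S p g Astar =
        ∑ i ∈ insert 0 Astar, ∑ v ∈ S.filter fun v => g Astar v = i, p v * v i) ∧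
    (util S p g Astar ≤ ∑ i ∈ insert 0 Astar, util S p g (thresh n b (b i))) ∧
    ∃ t : ℝ, util S p g Astar ≤ ((Astar.card : ℝ) + 1) * util S p g (thresh n b t) := by
  obtain ⟨hp, hsum, hvnn⟩ := hdist
  -- pointwise key lemma
  have key : ∀ i : Fin (n + 1), ∀ v ∈ S, g Astar v = i →
      v i ≤ v (g (thresh n b (b i)) v) := by
    intro i v hvS hgi
    have hiA : i ∈ insert 0 (thresh n b (b i)) := by
      by_cases hi0 : i = 0
      · simp [hi0]
      · simp [thresh, hi0]
    obtain ⟨hmem, hmax, htie⟩ := hg (thresh n b (b i)) v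
    obtain ⟨hmem', hmax', htie'⟩ := hg Astar v
    set j := g (thresh n b (b i)) v with hj
    have h1 : v i + b i ≤ v j + b j := hmax i hiA
    by_cases hj0 : j = 0
    · have h2 : v 0 + b 0 ≤ v i + b i := by
        have := hmax' 0 (Finset.mem_insert_self 0 Astar)
        rwa [hgi] at this
      have heq : v i + b i = v j + b j := by
        rw [hj0]; rw [hj0] at h1; linarith
      exact htie i hiA heq
    · have hjmem : j ∈ thresh n b (b i) := by
        rcases Finset.mem_insert.mp hmem with h | h
        · exact absurd h hj0
        · exact h
      have hbj : b j ≤ b i := by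
        have := Finset.mem_filter.mp hjmem
        exact this.2.2
      linarith
  -- part 1
  have part1 : util S p g Astar =
      ∑ i ∈ insert 0 Astar, ∑ v ∈ S.filter fun v => g Astar v = i, p v * v i := by
    unfold util
    rw [← Finset.sum_fiberwise_of_maps_to (fun v _ => (hg Astar v).1)
      (fun v => p v * v (g Astar v))]
    exact Finset.sum_congr rfl fun i _ => Finset.sum_congr rfl fun v hv => by
      obtain ⟨_, h⟩ := Finset.mem_filter.mp hv
      rw [h]
  -- per-index bound
  have bound : ∀ i ∈ insert 0 Astar,
      (∑ v ∈ S.filter fun v => g Astar v = i, p v * v i)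
        ≤ util S p g (thresh n b (b i)) := by
    intro i _
    unfold util
    calc ∑ v ∈ S.filter fun v => g Astar v = i, p v * v i
        ≤ ∑ v ∈ S.filter fun v => g Astar v = i,
            p v * v (g (thresh n b (b i)) v) := by
          refine Finset.sum_le_sum fun v hv => ?_
          obtain ⟨hvS, hgv⟩ := Finset.mem_filter.mp hv
          exact mul_le_mul_of_nonneg_left (key i v hvS hgv) (hp v hvS)
      _ ≤ ∑ v ∈ S, p v * v (g (thresh n b (b i)) v) :=
          Finset.sum_le_sum_of_subset_of_nonneg (Finset.filter_subset _ _)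
            (fun v hvS _ => mul_nonneg (hp v hvS) (hvnn v hvS _))
  have part2 : util S p g Astar ≤
      ∑ i ∈ insert 0 Astar, util S p g (thresh n b (b i)) := by
    rw [part1]; exact Finset.sum_le_sum bound
  refine ⟨part1, part2, ?_⟩
  obtain ⟨i0, hi0mem, hi0max⟩ := Finset.exists_max_image (insert 0 Astar)
    (fun i => util S p g (thresh n b (b i))) ⟨0, Finset.mem_insert_self _ _⟩
  refine ⟨b i0, ?_⟩
  have h3 : ∑ i ∈ insert 0 Astar, util S p g (thresh n b (b i))
      ≤ ((Astar.card : ℝ) + 1) * util S p g (thresh n b (b i0)) := by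
    calc ∑ i ∈ insert 0 Astar, util S p g (thresh n b (b i))
        ≤ ∑ _i ∈ insert 0 Astar, util S p g (thresh n b (b i0)) :=
          Finset.sum_le_sum fun i hi => hi0max i hi
      _ = ((insert 0 Astar).card : ℝ) * util S p g (thresh n b (b i0)) := by
          rw [Finset.sum_const, nsmul_eq_mul]
      _ = ((Astar.card : ℝ) + 1) * util S p g (thresh n b (b i0)) := by
          rw [Finset.card_insert_of_notMem hopt.1]
          push_cast; ring
  linarith
end

section
/- Assume the values v_0, v_1, …, v_n are mutually independent (the outside option's value may be randomized), all values have finite support, and every action in the optimal set A* is selected with positive probability. For every integer α ≥ 4: if f(A*) > 16α · f(A_t) for every threshold t ∈ ℝ, then there is an action whose value takes, with positive probability, a value at least ((α−2)^{α−1}/(8α)) · f(A*). Equivalently, writing v_max for the largest value in any action's support and ρ = v_max/f(A*), the best threshold is an O(log ρ / log log ρ)-approximation to f(A*). -/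
open Finset

namespace DelegProof
open scoped Classical

variable {n : ℕ}

noncomputable def ind (P : Prop) : ℝ := if P then 1 else 0

lemma ind_nonneg (P : Prop) : 0 ≤ ind P := by unfold ind; split <;> norm_num
lemma ind_le_one (P : Prop) : ind P ≤ 1 := by unfold ind; split <;> norm_num
lemma ind_of {P : Prop} (h : P) : ind P = 1 := if_pos h
lemma ind_of_not {P : Prop} (h : ¬ P) : ind P = 0 := if_neg h

section Indep

variable (S : Finset (Profile n)) (p : Profile n → ℝ)

noncomputable def marg (i : Fin (n+1)) (x : ℝ) : ℝ :=
  ∑ v ∈ S.filter (fun v => v i = x), p v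

noncomputable def coordSet (i : Fin (n+1)) : Finset ℝ := S.image fun v => v i

noncomputable def grid : Finset (Profile n) :=
  Fintype.piFinset fun i => coordSet S i

noncomputable def gridOn (B : Finset (Fin (n+1))) : Finset (Profile n) :=
  Fintype.piFinset fun i => if i ∈ B then coordSet S i else {0}

noncomputable def merge (B : Finset (Fin (n+1))) (x y : Profile n) : Profile n :=
  fun i => if i ∈ B then x i else y i

variable {S p}

lemma S_subset_grid : S ⊆ grid S := by
  intro v hv
  rw [grid, Fintype.mem_piFinset]
  intro i; exact Finset.mem_image_of_mem _ hv

lemma prod_marg_eq (hindep : IndepValues S p) (w : Profile n) :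
    (∏ i, marg S p i (w i)) = if w ∈ S then p w else 0 := by
  have h := (hindep w).symm
  rw [show (∏ i, marg S p i (w i)) = ∏ i : Fin (n+1), ∑ v ∈ S.filter fun v => v i = w i, p v from rfl]
  rw [h, Finset.filter_eq' S w]
  split_ifs with hw
  · simp
  · simp

lemma sum_grid (hindep : IndepValues S p) (h : Profile n → ℝ) :
    ∑ v ∈ S, p v * h v = ∑ w ∈ grid S, (∏ i, marg S p i (w i)) * h w := by
  have e1 : ∀ v ∈ S, p v * h v = (∏ i, marg S p i (v i)) * h v := fun v hv => by
    rw [prod_marg_eq hindep v, if_pos hv]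
  rw [Finset.sum_congr rfl e1]
  exact Finset.sum_subset S_subset_grid (fun w _ hws => by
    rw [prod_marg_eq hindep w, if_neg hws, zero_mul])

lemma marg_total (hdist : ValidDist S p) (i : Fin (n+1)) :
    ∑ x ∈ coordSet S i, marg S p i x = 1 := by
  unfold marg coordSet
  rw [Finset.sum_fiberwise_of_maps_to (fun v hv => Finset.mem_image_of_mem _ hv)]
  exact hdist.2.1

lemma grid_split (B : Finset (Fin (n+1))) (H : Profile n → ℝ) :
    ∑ w ∈ grid S, H w = ∑ x ∈ gridOn S B, ∑ y ∈ gridOn S Bᶜ, H (merge B x y) := by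
  rw [← Finset.sum_product']
  apply Finset.sum_nbij'
    (i := fun w => ((fun i => if i ∈ B then w i else 0 : Profile n),
                    (fun i => if i ∈ B then 0 else w i : Profile n)))
    (j := fun z => merge B z.1 z.2)
  · intro w hw
    rw [grid, Fintype.mem_piFinset] at hw
    rw [Finset.mem_product]
    constructor
    · rw [gridOn, Fintype.mem_piFinset]
      intro i
      by_cases hi : i ∈ B <;> simp [hi, hw i]
    · rw [gridOn, Fintype.mem_piFinset]
      intro i
      by_cases hi : i ∈ B <;> simp [hi, hw i]
  · intro z hz
    rw [Finset.mem_product] at hz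
    obtain ⟨h1, h2⟩ := hz
    rw [gridOn, Fintype.mem_piFinset] at h1 h2
    rw [grid, Fintype.mem_piFinset]
    intro i
    have k1 := h1 i; have k2 := h2 i
    by_cases hi : i ∈ B
    · simpa [merge, hi] using (by simpa [hi] using k1)
    · simpa [merge, hi] using (by simpa [hi] using k2)
  · intro w hw
    funext i
    by_cases hi : i ∈ B <;> simp [merge, hi]
  · intro z hz
    rw [Finset.mem_product] at hz
    obtain ⟨h1, h2⟩ := hz
    rw [gridOn, Fintype.mem_piFinset] at h1 h2
    ext i
    · by_cases hi : i ∈ B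
      · simp [merge, hi]
      · have := h1 i; simp [hi] at this; simp [merge, hi, this]
    · by_cases hi : i ∈ B
      · have := h2 i; simp [hi] at this; simp [merge, hi, this]
      · simp [merge, hi]
  · intro w hw
    apply congrArg
    funext i
    by_cases hi : i ∈ B <;> simp [merge, hi]


noncomputable def PBf (S : Finset (Profile n)) (p : Profile n → ℝ)
    (B : Finset (Fin (n+1))) (x : Profile n) : ℝ :=
  ∏ i, if i ∈ B then marg S p i (x i) else 1

lemma sum_PBf (hdist : ValidDist S p) (B : Finset (Fin (n+1))) :
    ∑ x ∈ gridOn S B, PBf S p B x = 1 := by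
  unfold PBf gridOn
  rw [← Finset.prod_univ_sum (fun i => if i ∈ B then coordSet S i else {0})
      (fun i c => if i ∈ B then marg S p i c else 1)]
  apply Finset.prod_eq_one
  intro i _
  by_cases hi : i ∈ B
  · simpa [hi] using marg_total hdist i
  · simp [hi]

lemma prod_marg_merge (B : Finset (Fin (n+1))) (x y : Profile n) :
    (∏ i, marg S p i (merge B x y i)) = PBf S p B x * PBf S p Bᶜ y := by
  unfold PBf
  rw [← Finset.prod_mul_distrib]
  apply Finset.prod_congr rfl
  intro i _
  by_cases hi : i ∈ B <;> simp [merge, hi]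

lemma sum_split (hindep : IndepValues S p) (B : Finset (Fin (n+1))) (h : Profile n → ℝ) :
    ∑ v ∈ S, p v * h v
      = ∑ x ∈ gridOn S B, ∑ y ∈ gridOn S Bᶜ, (PBf S p B x * PBf S p Bᶜ y) * h (merge B x y) := by
  rw [sum_grid hindep h, grid_split B]
  exact Finset.sum_congr rfl fun x _ => Finset.sum_congr rfl fun y _ => by
    rw [prod_marg_merge]

lemma mixed_split (hdist : ValidDist S p) (hindep : IndepValues S p)
    (B : Finset (Fin (n+1))) (F κ : Profile n → ℝ) (G : ℝ → Profile n → ℝ)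
    (hF : ∀ v w : Profile n, (∀ i ∈ B, v i = w i) → F v = F w)
    (hκ : ∀ v w : Profile n, (∀ i ∈ B, v i = w i) → κ v = κ w)
    (hG : ∀ (s : ℝ) (v w : Profile n), (∀ i ∉ B, v i = w i) → G s v = G s w) :
    ∑ v ∈ S, p v * (F v * G (κ v) v)
      = ∑ v ∈ S, p v * (F v * (∑ w ∈ S, p w * G (κ v) w)) := by
  have hmB : ∀ (x y : Profile n), ∀ i ∈ B, merge B x y i = x i := by
    intro x y i hi; simp [merge, hi]
  have hmC : ∀ (x y : Profile n), ∀ i, i ∉ B → merge B x y i = y i := by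
    intro x y i hi; simp [merge, hi]
  have hFm : ∀ x y : Profile n, F (merge B x y) = F x :=
    fun x y => hF _ _ (fun i hi => hmB x y i hi)
  have hκm : ∀ x y : Profile n, κ (merge B x y) = κ x :=
    fun x y => hκ _ _ (fun i hi => hmB x y i hi)
  have hGm : ∀ (s : ℝ) (x y : Profile n), G s (merge B x y) = G s y :=
    fun s x y => hG s _ _ (fun i hi => hmC x y i hi)
  have hq : ∀ s : ℝ, (∑ w ∈ S, p w * G s w)
      = ∑ y ∈ gridOn S Bᶜ, PBf S p Bᶜ y * G s y := by
    intro s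
    rw [sum_split hindep B (fun w => G s w)]
    have : ∀ x ∈ gridOn S B, (∑ y ∈ gridOn S Bᶜ, (PBf S p B x * PBf S p Bᶜ y) * G s (merge B x y))
        = PBf S p B x * ∑ y ∈ gridOn S Bᶜ, PBf S p Bᶜ y * G s y := by
      intro x _
      rw [Finset.mul_sum]
      exact Finset.sum_congr rfl fun y _ => by rw [hGm]; ring
    rw [Finset.sum_congr rfl this, ← Finset.sum_mul, sum_PBf hdist B, one_mul]
  rw [sum_split hindep B (fun v => F v * G (κ v) v),
      sum_split hindep B (fun v => F v * (∑ w ∈ S, p w * G (κ v) w))]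
  apply Finset.sum_congr rfl
  intro x _
  have hL : ∀ y ∈ gridOn S Bᶜ,
      (PBf S p B x * PBf S p Bᶜ y) * (F (merge B x y) * G (κ (merge B x y)) (merge B x y))
        = (PBf S p B x * F x) * (PBf S p Bᶜ y * G (κ x) y) := by
    intro y _
    rw [hFm, hκm, hGm]; ring
  have hR : ∀ y ∈ gridOn S Bᶜ,
      (PBf S p B x * PBf S p Bᶜ y) *
        (F (merge B x y) * (∑ w ∈ S, p w * G (κ (merge B x y)) w))
        = PBf S p Bᶜ y * ((PBf S p B x * F x) * (∑ w ∈ S, p w * G (κ x) w)) := by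
    intro y _
    rw [hFm, hκm]; ring
  rw [Finset.sum_congr rfl hL, Finset.sum_congr rfl hR, ← Finset.mul_sum, ← Finset.sum_mul,
      sum_PBf hdist Bᶜ, one_mul, hq (κ x), Finset.mul_sum]

end Indep

section Choice
variable {b : Fin (n+1) → ℝ} {g : Finset (Fin (n+1)) → Profile n → Fin (n+1)}

lemma mem_thresh {t : ℝ} {i : Fin (n+1)} :
    i ∈ thresh n b t ↔ i ≠ 0 ∧ b i ≤ t := by
  unfold thresh; simp

variable (hg : IsChoice n b g)
include hg

lemma choice_ge (A : Finset (Fin (n+1))) (v : Profile n) {j} (hj : j ∈ insert 0 A)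
    {C : ℝ} (hC : ∀ k ∈ insert 0 A, b k ≤ C) :
    v j + b j - C ≤ v (g A v) := by
  have h1 := (hg A v).2.1 j hj
  have h2 := hC _ (hg A v).1
  linarith

lemma choice_tie (A : Finset (Fin (n+1))) (v : Profile n) {j} (hj : j ∈ insert 0 A)
    (hmax : ∀ k ∈ insert 0 A, v k + b k ≤ v j + b j) :
    v j ≤ v (g A v) := by
  have h1 := (hg A v).2.1 j hj
  have h2 := hmax _ (hg A v).1
  exact (hg A v).2.2 j hj (by linarith)

lemma choice_ge' {t s : ℝ} (v : Profile n) {k} (hk : k ∈ thresh n b t)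
    (hku : s < v k + b k) (h0 : v 0 + b 0 ≤ s) :
    s - t ≤ v (g (thresh n b t) v) := by
  have hmem : k ∈ insert 0 (thresh n b t) := Finset.mem_insert_of_mem hk
  have h1 := (hg (thresh n b t) v).2.1 k hmem
  have hmem2 := (hg (thresh n b t) v).1
  rw [Finset.mem_insert] at hmem2
  rcases hmem2 with h | h
  · rw [h] at h1; linarith
  · have := (mem_thresh.1 h).2
    linarith

end Choice

section Defs
variable (b : Fin (n+1) → ℝ) (Astar : Finset (Fin (n+1)))

noncomputable def bplus : ℝ := (insert 0 Astar).sup' (Finset.insert_nonempty _ _) b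

noncomputable def Uu (v : Profile n) : ℝ :=
  (insert 0 Astar).sup' (Finset.insert_nonempty _ _) (fun i => v i + b i)

noncomputable def Mm (v : Profile n) : ℝ :=
  (insert (0:ℝ) ((Astar.filter fun i => v i + b i = Uu b Astar v).image fun i => v i)).max'
    (Finset.insert_nonempty _ _)

noncomputable def UuA (hA : Astar.Nonempty) (v : Profile n) : ℝ :=
  Astar.sup' hA (fun i => v i + b i)

noncomputable def MmA (hA : Astar.Nonempty) (v : Profile n) : ℝ :=
  (insert (0:ℝ) ((Astar.filter fun i => v i + b i = UuA b Astar hA v).image fun i => v i)).max'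
    (Finset.insert_nonempty _ _)

noncomputable def EE (S : Finset (Profile n)) (p : Profile n → ℝ) (φ : Profile n → ℝ) : ℝ :=
  ∑ v ∈ S, p v * φ v

end Defs

section DefLemmas
variable {b : Fin (n+1) → ℝ} {Astar : Finset (Fin (n+1))}

lemma le_Uu {v : Profile n} {j} (hj : j ∈ insert 0 Astar) :
    v j + b j ≤ Uu b Astar v := by
  unfold Uu; exact Finset.le_sup' (fun i => v i + b i) hj

lemma u0_le_Uu {v : Profile n} : v 0 + b 0 ≤ Uu b Astar v :=
  le_Uu (Finset.mem_insert_self _ _)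

lemma b_le_bplus {j} (hj : j ∈ insert 0 Astar) : b j ≤ bplus b Astar :=
  Finset.le_sup' _ hj

lemma bplus_le_Uu {v : Profile n} (hv : ∀ i, 0 ≤ v i) : bplus b Astar ≤ Uu b Astar v := by
  unfold bplus Uu
  apply Finset.sup'_le
  intro i hi
  have := hv i
  have := Finset.le_sup' (f := fun i => v i + b i) hi
  linarith [Finset.le_sup' (fun i => v i + b i) hi]

lemma max'_eq_of_eq {s t : Finset ℝ} (hs : s.Nonempty) (h : s = t) :
    s.max' hs = t.max' (h ▸ hs) := by subst h; rfl

lemma Mm_nonneg (v : Profile n) : 0 ≤ Mm b Astar v :=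
  Finset.le_max' _ _ (Finset.mem_insert_self _ _)

lemma Mm_le {v : Profile n} {j} (hj : j ∈ Astar) (hu : v j + b j = Uu b Astar v) :
    v j ≤ Mm b Astar v := by
  apply Finset.le_max'
  apply Finset.mem_insert_of_mem
  exact Finset.mem_image_of_mem _ (Finset.mem_filter.2 ⟨hj, hu⟩)

lemma Mm_attained {v : Profile n} (h : Mm b Astar v ≠ 0) :
    ∃ j ∈ Astar, v j + b j = Uu b Astar v ∧ v j = Mm b Astar v := by
  have hmem := Finset.max'_mem
    (insert (0:ℝ) ((Astar.filter fun i => v i + b i = Uu b Astar v).image fun i => v i))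
    (Finset.insert_nonempty _ _)
  rw [Finset.mem_insert] at hmem
  rcases hmem with h0 | hIm
  · exact absurd h0 h
  · obtain ⟨j, hj, hje⟩ := Finset.mem_image.1 hIm
    obtain ⟨hjA, hju⟩ := Finset.mem_filter.1 hj
    exact ⟨j, hjA, hju, hje⟩

lemma le_UuA {hA : Astar.Nonempty} {v : Profile n} {j} (hj : j ∈ Astar) :
    v j + b j ≤ UuA b Astar hA v := by
  unfold UuA; exact Finset.le_sup' (fun i => v i + b i) hj

lemma MmA_nonneg {hA : Astar.Nonempty} (v : Profile n) : 0 ≤ MmA b Astar hA v :=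
  Finset.le_max' _ _ (Finset.mem_insert_self _ _)

lemma Mm_pos_spec {hA : Astar.Nonempty} {v : Profile n} (h : 0 < Mm b Astar v) :
    Uu b Astar v = UuA b Astar hA v ∧ Mm b Astar v = MmA b Astar hA v
      ∧ v 0 + b 0 ≤ UuA b Astar hA v := by
  obtain ⟨j, hjA, hju, hje⟩ := Mm_attained (ne_of_gt h)
  have h1 : UuA b Astar hA v ≤ Uu b Astar v := by
    apply Finset.sup'_le
    intro i hi
    exact le_Uu (Finset.mem_insert_of_mem hi)
  have h2 : Uu b Astar v ≤ UuA b Astar hA v := by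
    rw [← hju]
    exact le_UuA hjA
  have hUU : Uu b Astar v = UuA b Astar hA v := le_antisymm h2 h1
  refine ⟨hUU, ?_, by rw [← hUU]; exact u0_le_Uu⟩
  have hf : Astar.filter (fun i => v i + b i = Uu b Astar v)
      = Astar.filter (fun i => v i + b i = UuA b Astar hA v) := by
    apply Finset.filter_congr
    intro i _
    rw [hUU]
  unfold Mm MmA
  exact max'_eq_of_eq _ (by rw [hf])

lemma Uu_congr {v w : Profile n} (h : ∀ i ∈ insert 0 Astar, v i = w i) :
    Uu b Astar v = Uu b Astar w := by
  unfold Uu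
  apply Finset.sup'_congr _ rfl
  intro i hi; rw [h i hi]

lemma Mm_congr {v w : Profile n} (h : ∀ i ∈ insert 0 Astar, v i = w i) :
    Mm b Astar v = Mm b Astar w := by
  have hU := Uu_congr (b := b) h
  unfold Mm
  have hf : Astar.filter (fun i => v i + b i = Uu b Astar v)
      = Astar.filter (fun i => w i + b i = Uu b Astar w) := by
    apply Finset.filter_congr
    intro i hi
    rw [h i (Finset.mem_insert_of_mem hi), hU]
  have him : (Astar.filter (fun i => v i + b i = Uu b Astar v)).image (fun i => v i)
      = (Astar.filter (fun i => w i + b i = Uu b Astar w)).image (fun i => w i) := by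
    rw [← hf]
    apply Finset.image_congr
    intro i hi
    exact h i (Finset.mem_insert_of_mem (Finset.mem_filter.1 hi).1)
  exact max'_eq_of_eq _ (by rw [him])

lemma UuA_congr {hA : Astar.Nonempty} {v w : Profile n} (h : ∀ i ∈ Astar, v i = w i) :
    UuA b Astar hA v = UuA b Astar hA w := by
  unfold UuA
  apply Finset.sup'_congr _ rfl
  intro i hi; rw [h i hi]

lemma MmA_congr {hA : Astar.Nonempty} {v w : Profile n} (h : ∀ i ∈ Astar, v i = w i) :
    MmA b Astar hA v = MmA b Astar hA w := by
  have hU := UuA_congr (b := b) (hA := hA) h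
  unfold MmA
  have hf : Astar.filter (fun i => v i + b i = UuA b Astar hA v)
      = Astar.filter (fun i => w i + b i = UuA b Astar hA w) := by
    apply Finset.filter_congr
    intro i hi
    rw [h i hi, hU]
  have him : (Astar.filter (fun i => v i + b i = UuA b Astar hA v)).image (fun i => v i)
      = (Astar.filter (fun i => w i + b i = UuA b Astar hA w)).image (fun i => w i) := by
    rw [← hf]
    apply Finset.image_congr
    intro i hi
    exact h i (Finset.mem_filter.1 hi).1
  exact max'_eq_of_eq _ (by rw [him])

end DefLemmas

section EELemmas
variable {S : Finset (Profile n)} {p : Profile n → ℝ}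

lemma EE_mono (hp : ∀ v ∈ S, 0 ≤ p v) {φ ψ : Profile n → ℝ}
    (h : ∀ v ∈ S, φ v ≤ ψ v) : EE S p φ ≤ EE S p ψ :=
  Finset.sum_le_sum fun v hv => mul_le_mul_of_nonneg_left (h v hv) (hp v hv)

lemma EE_nonneg (hp : ∀ v ∈ S, 0 ≤ p v) {φ : Profile n → ℝ}
    (h : ∀ v ∈ S, 0 ≤ φ v) : 0 ≤ EE S p φ :=
  Finset.sum_nonneg fun v hv => mul_nonneg (hp v hv) (h v hv)

lemma EE_one (h1 : ∑ v ∈ S, p v = 1) : EE S p (fun _ => 1) = 1 := by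
  unfold EE; simpa using h1

lemma EE_add (φ ψ : Profile n → ℝ) : EE S p (fun v => φ v + ψ v) = EE S p φ + EE S p ψ := by
  unfold EE
  rw [← Finset.sum_add_distrib]
  exact Finset.sum_congr rfl fun v _ => by ring

lemma EE_sub (φ ψ : Profile n → ℝ) : EE S p (fun v => φ v - ψ v) = EE S p φ - EE S p ψ := by
  unfold EE
  rw [← Finset.sum_sub_distrib]
  exact Finset.sum_congr rfl fun v _ => by ring

lemma EE_smul (c : ℝ) (φ : Profile n → ℝ) : EE S p (fun v => c * φ v) = c * EE S p φ := by
  unfold EE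
  rw [Finset.mul_sum]
  exact Finset.sum_congr rfl fun v _ => by ring

lemma EE_finsum (J : Finset ℕ) (φ : ℕ → Profile n → ℝ) :
    EE S p (fun v => ∑ j ∈ J, φ j v) = ∑ j ∈ J, EE S p (φ j) := by
  unfold EE
  rw [Finset.sum_comm]
  exact Finset.sum_congr rfl fun v _ => by rw [Finset.mul_sum]

lemma EE_compl (h1 : ∑ v ∈ S, p v = 1) (P : Profile n → Prop) :
    EE S p (fun v => ind (¬ P v)) = 1 - EE S p (fun v => ind (P v)) := by
  have : ∀ v : Profile n, ind (¬ P v) = 1 - ind (P v) := by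
    intro v; unfold ind; by_cases h : P v <;> simp [h]
  rw [show (fun v => ind (¬ P v)) = fun v => 1 - ind (P v) from funext this, EE_sub, EE_one h1]

lemma EE_ind_nonneg (hp : ∀ v ∈ S, 0 ≤ p v) (P : Profile n → Prop) :
    0 ≤ EE S p (fun v => ind (P v)) :=
  EE_nonneg hp fun v _ => ind_nonneg _

lemma EE_ind_le_one (hp : ∀ v ∈ S, 0 ≤ p v) (h1 : ∑ v ∈ S, p v = 1) (P : Profile n → Prop) :
    EE S p (fun v => ind (P v)) ≤ 1 := by
  have := EE_mono hp (fun v _ => ind_le_one (P v))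
  rw [EE_one h1] at this
  exact this

end EELemmas

lemma ind_mul_ind (P Q : Prop) : ind P * ind Q = ind (P ∧ Q) := by
  unfold ind
  by_cases hP : P <;> by_cases hQ : Q <;> simp [hP, hQ]

lemma geom_locate {a r : ℝ} (ha : 0 < a) (hr : 1 ≤ r) :
    ∀ (m : ℕ) (x : ℝ), a ≤ x → x < a * r ^ m → ∃ j < m, a * r ^ j ≤ x ∧ x < a * r ^ (j+1) := by
  intro m
  induction m with
  | zero => intro x hx hx2; simp at hx2; linarith
  | succ m ih =>
    intro x hx hx2
    by_cases h : x < a * r ^ m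
    · obtain ⟨j, hj, hj2⟩ := ih x hx h
      exact ⟨j, Nat.lt_succ_of_lt hj, hj2⟩
    · exact ⟨m, Nat.lt_succ_self m, le_of_not_gt h, hx2⟩

lemma ind_congr {P Q : Prop} (h : P ↔ Q) : ind P = ind Q := by
  unfold ind; split_ifs with h1 h2 <;> tauto

set_option maxHeartbeats 3000000 in
theorem main_contra {n : ℕ} (b : Fin (n+1) → ℝ) (S : Finset (Profile n)) (p : Profile n → ℝ)
    (hdist : ValidDist S p) (hindep : IndepValues S p)
    (g : Finset (Fin (n+1)) → Profile n → Fin (n+1)) (hg : IsChoice n b g)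
    (Astar : Finset (Fin (n+1))) (hopt : OptimalMenu S p g Astar)
    (hA : Astar.Nonempty)
    (α : ℕ) (hα : 4 ≤ α)
    (hbad : ∀ t : ℝ, 16 * (α : ℝ) * util S p g (thresh n b t) < util S p g Astar)
    (hcon : ∀ i : Fin (n+1), i ≠ 0 → ∀ v ∈ S, 0 < p v →
      v i < ((α : ℝ) - 2) ^ (α - 1) / (8 * (α : ℝ)) * util S p g Astar) :
    False := by
  have hα4 : (4:ℝ) ≤ (α:ℝ) := by exact_mod_cast hα
  have hαpos : (0:ℝ) < (α:ℝ) := by linarith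
  have hp := hdist.1
  have h1 := hdist.2.1
  have hvnn := hdist.2.2
  have hvalnn : ∀ (A : Finset (Fin (n+1))) (v : Profile n), v ∈ S → 0 ≤ v (g A v) :=
    fun A v hv => hvnn v hv _
  have hutil0 : ∀ A : Finset (Fin (n+1)), 0 ≤ util S p g A :=
    fun A => Finset.sum_nonneg fun v hv => mul_nonneg (hp v hv) (hvalnn A v hv)
  have hOPTpos : 0 < util S p g Astar := by
    have h := hbad 0
    nlinarith [hutil0 (thresh n b 0)]
  set OPT := util S p g Astar with hOPTdef
  set fs := OPT / (16*(α:ℝ)) with hfs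
  have hfspos : 0 < fs := by
    rw [hfs]; positivity
  have hOPTfs : OPT = 16*(α:ℝ)*fs := by
    rw [hfs]; field_simp
  have hub : ∀ t : ℝ, util S p g (thresh n b t) ≤ fs := by
    intro t
    have h := hbad t
    rw [hfs, le_div_iff₀ (by positivity)]
    nlinarith
  set bp := bplus b Astar with hbpdef
  have hb0bp : b 0 ≤ bp := b_le_bplus (Finset.mem_insert_self _ _)
  have hbin : ∀ j ∈ Astar, j ∈ thresh n b bp := fun j hj =>
    mem_thresh.2 ⟨ne_of_mem_of_not_mem hj hopt.1, b_le_bplus (Finset.mem_insert_of_mem hj)⟩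
  have hmenu_bp : ∀ j ∈ insert 0 Astar, j ∈ insert 0 (thresh n b bp) := by
    intro j hj
    rcases Finset.mem_insert.1 hj with h | h
    · rw [h]; exact Finset.mem_insert_self _ _
    · exact Finset.mem_insert_of_mem (hbin j h)
  have hbias_bp : ∀ k ∈ insert 0 (thresh n b bp), b k ≤ bp := by
    intro k hk
    rcases Finset.mem_insert.1 hk with h | h
    · rw [h]; exact hb0bp
    · exact (mem_thresh.1 h).2
  have hUbp : ∀ v ∈ S, bp ≤ Uu b Astar v := fun v hv => bplus_le_Uu (hvnn v hv)
  have hUuMmbp : ∀ v : Profile n, 0 < Mm b Astar v → Uu b Astar v - Mm b Astar v ≤ bp := by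
    intro v hM
    obtain ⟨j, hjA, hju, hje⟩ := Mm_attained (ne_of_gt hM)
    have := b_le_bplus (Astar := Astar) (b := b) (Finset.mem_insert_of_mem hjA)
    rw [← hju, ← hje]
    linarith
  have hcapture : ∀ (t : ℝ) (v : Profile n), v ∈ S → 0 < Mm b Astar v →
      (Uu b Astar v - Mm b Astar v ≤ t) →
      (∀ k ∈ thresh n b t \ Astar, v k + b k ≤ Uu b Astar v) →
      Mm b Astar v ≤ v (g (thresh n b t) v) := by
    intro t v _ hM hbias hnb
    obtain ⟨j, hjA, hju, hje⟩ := Mm_attained (ne_of_gt hM)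
    have hjt : j ∈ thresh n b t := by
      apply mem_thresh.2
      refine ⟨ne_of_mem_of_not_mem hjA hopt.1, ?_⟩
      have : b j = Uu b Astar v - v j := by linarith
      rw [this, hje]; exact hbias
    rw [← hje]
    apply choice_tie hg _ v (Finset.mem_insert_of_mem hjt)
    intro k hk
    rw [hju]
    rcases Finset.mem_insert.1 hk with hk0 | hkt
    · rw [hk0]; exact u0_le_Uu
    · by_cases hkA : k ∈ Astar
      · exact le_Uu (Finset.mem_insert_of_mem hkA)
      · exact hnb k (Finset.mem_sdiff.2 ⟨hkt, hkA⟩)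
  have hge_util : ∀ (t : ℝ) (φ : Profile n → ℝ),
      (∀ v ∈ S, φ v ≤ v (g (thresh n b t) v)) → EE S p φ ≤ fs := by
    intro t φ h
    calc EE S p φ ≤ EE S p (fun v => v (g (thresh n b t) v)) := EE_mono hp h
      _ = util S p g (thresh n b t) := rfl
      _ ≤ fs := hub t
  -- I1 : E[(U - bp)^+] ≤ fs
  have hI1 : EE S p (fun v => max (Uu b Astar v - bp) 0) ≤ fs := by
    apply hge_util bp
    intro v hv
    apply max_le _ (hvalnn _ v hv)
    obtain ⟨j, hj, hje⟩ := Finset.exists_mem_eq_sup'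
      (Finset.insert_nonempty 0 Astar) (fun i => v i + b i)
    have h2 := choice_ge hg (thresh n b bp) v (hmenu_bp j hj) hbias_bp
    have : Uu b Astar v = v j + b j := hje
    linarith
  -- pairing with outside-option condition
  have hpair : ∀ (t s : ℝ), 0 ≤ s - t →
      (s - t) * EE S p (fun v =>
        ind ((∃ k ∈ thresh n b t \ Astar, s < v k + b k) ∧ v 0 + b 0 ≤ s)) ≤ fs := by
    intro t s hst
    rw [← EE_smul]
    apply hge_util t
    intro v hv
    by_cases hP : (∃ k ∈ thresh n b t \ Astar, s < v k + b k) ∧ v 0 + b 0 ≤ s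
    · rw [ind_of hP, mul_one]
      obtain ⟨⟨k, hk, hks⟩, h0⟩ := hP
      exact choice_ge' hg v (Finset.mem_sdiff.1 hk).1 hks h0
    · rw [ind_of_not hP, mul_zero]
      exact hvalnn _ v hv
  -- pairing at the top menu, no outside-option condition
  have hpairA : ∀ s : ℝ, bp ≤ s →
      (s - bp) * EE S p (fun v =>
        ind (∃ k ∈ thresh n b bp \ Astar, s < v k + b k)) ≤ fs := by
    intro s hs
    rw [← EE_smul]
    apply hge_util bp
    intro v hv
    by_cases hP : ∃ k ∈ thresh n b bp \ Astar, s < v k + b k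
    · rw [ind_of hP, mul_one]
      obtain ⟨k, hk, hks⟩ := hP
      have := choice_ge hg (thresh n b bp) v
        (Finset.mem_insert_of_mem (Finset.mem_sdiff.1 hk).1) hbias_bp
      linarith
    · rw [ind_of_not hP, mul_zero]
      exact hvalnn _ v hv
  -- helpers about external (junk) coordinates
  have hExtne : ∀ (t : ℝ) (k : Fin (n+1)), k ∈ thresh n b t \ Astar →
      k ∉ ({0} : Finset (Fin (n+1))) := by
    intro t k hk hk0
    exact (mem_thresh.1 (Finset.mem_sdiff.1 hk).1).1 (Finset.mem_singleton.1 hk0)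
  have hExtnotB : ∀ (t : ℝ) (k : Fin (n+1)), k ∈ thresh n b t \ Astar →
      k ∉ insert 0 Astar := by
    intro t k hk hmem
    rcases Finset.mem_insert.1 hmem with h0 | hAst
    · exact (mem_thresh.1 (Finset.mem_sdiff.1 hk).1).1 h0
    · exact (Finset.mem_sdiff.1 hk).2 hAst
  have hGcongr : ∀ (t s' : ℝ) (v w : Profile n), (∀ i ∉ insert 0 Astar, v i = w i) →
      ind (∀ k ∈ thresh n b t \ Astar, v k + b k ≤ s')
        = ind (∀ k ∈ thresh n b t \ Astar, w k + b k ≤ s') := by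
    intro t s' v w h
    apply ind_congr
    constructor <;> intro hall k hk
    · rw [← h k (hExtnotB t k hk)]; exact hall k hk
    · rw [h k (hExtnotB t k hk)]; exact hall k hk
  have hnotiff : ∀ (t s : ℝ) (v : Profile n),
      (¬ (∀ k ∈ thresh n b t \ Astar, v k + b k ≤ s)) ↔
        (∃ k ∈ thresh n b t \ Astar, s < v k + b k) := by
    intro t s v
    push_neg
    rfl
  have hcompl : ∀ t s : ℝ,
      EE S p (fun v => ind (∃ k ∈ thresh n b t \ Astar, s < v k + b k))
        = 1 - EE S p (fun v => ind (∀ k ∈ thresh n b t \ Astar, v k + b k ≤ s)) := by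
    intro t s
    rw [← EE_compl h1 (fun v => ∀ k ∈ thresh n b t \ Astar, v k + b k ≤ s)]
    unfold EE
    exact Finset.sum_congr rfl fun v _ => congrArg _ (ind_congr (hnotiff t s v).symm)
  -- independence: blocker event and outside-option event are independent
  have hfact : ∀ t s : ℝ,
      EE S p (fun v => ind ((∃ k ∈ thresh n b t \ Astar, s < v k + b k) ∧ v 0 + b 0 ≤ s))
        = EE S p (fun v => ind (∃ k ∈ thresh n b t \ Astar, s < v k + b k))
          * EE S p (fun v => ind (v 0 + b 0 ≤ s)) := by
    intro t s
    have e2 := mixed_split hdist hindep ({0} : Finset (Fin (n+1)))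
      (fun v => ind (v 0 + b 0 ≤ s)) (fun _ => (0:ℝ))
      (fun _ w => ind (∃ k ∈ thresh n b t \ Astar, s < w k + b k))
      (fun v w h => by
        show ind (v 0 + b 0 ≤ s) = ind (w 0 + b 0 ≤ s)
        rw [h 0 (Finset.mem_singleton_self 0)])
      (fun _ _ _ => rfl)
      (by
        intro s' v w h
        apply ind_congr
        constructor <;> rintro ⟨k, hk, hks⟩
        · exact ⟨k, hk, by rwa [← h k (hExtne t k hk)]⟩
        · exact ⟨k, hk, by rwa [h k (hExtne t k hk)]⟩)
    calc EE S p (fun v => ind ((∃ k ∈ thresh n b t \ Astar, s < v k + b k) ∧ v 0 + b 0 ≤ s))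
        = ∑ v ∈ S, p v * (ind (v 0 + b 0 ≤ s)
            * ind (∃ k ∈ thresh n b t \ Astar, s < v k + b k)) := by
          refine Finset.sum_congr rfl fun v _ => congrArg _ ?_
          rw [ind_mul_ind]
          exact ind_congr (by tauto)
      _ = ∑ v ∈ S, p v * (ind (v 0 + b 0 ≤ s)
            * (∑ w ∈ S, p w * ind (∃ k ∈ thresh n b t \ Astar, s < w k + b k))) := e2
      _ = (∑ w ∈ S, p w * ind (∃ k ∈ thresh n b t \ Astar, s < w k + b k))
            * (∑ v ∈ S, p v * ind (v 0 + b 0 ≤ s)) := by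
          have hrw : (fun v : Profile n => p v * (ind (v 0 + b 0 ≤ s)
              * (∑ w ∈ S, p w * ind (∃ k ∈ thresh n b t \ Astar, s < w k + b k))))
            = fun v : Profile n => (p v * ind (v 0 + b 0 ≤ s))
              * (∑ w ∈ S, p w * ind (∃ k ∈ thresh n b t \ Astar, s < w k + b k)) := by
            funext v; ring
          show Finset.sum S (fun v : Profile n => p v * (ind (v 0 + b 0 ≤ s)
              * (∑ w ∈ S, p w * ind (∃ k ∈ thresh n b t \ Astar, s < w k + b k)))) = _
          rw [hrw, ← Finset.sum_mul, mul_comm]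
      _ = _ := rfl
  -- the key theta bound
  have hθbound : ∀ (t s : ℝ), 0 ≤ s - t →
      (s - t) * ((1 - EE S p (fun w => ind (∀ k ∈ thresh n b t \ Astar, w k + b k ≤ s)))
        * EE S p (fun w => ind (w 0 + b 0 ≤ s))) ≤ fs := by
    intro t s hst
    have h := hpair t s hst
    rw [hfact t s, hcompl t s] at h
    exact h
  have hq_top : ∀ s : ℝ, bp + 8*fs ≤ s →
      1 - EE S p (fun w => ind (∀ k ∈ thresh n b bp \ Astar, w k + b k ≤ s)) ≤ 1/8 := by
    intro s hs
    have h := hpairA s (by nlinarith)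
    rw [hcompl bp s] at h
    have hle1 := EE_ind_le_one hp h1 (fun w => ∀ k ∈ thresh n b bp \ Astar, w k + b k ≤ s)
    have h0 : 0 ≤ 1 - EE S p (fun w => ind (∀ k ∈ thresh n b bp \ Astar, w k + b k ≤ s)) := by
      linarith
    have key : 8*fs*(1 - EE S p (fun w => ind (∀ k ∈ thresh n b bp \ Astar, w k + b k ≤ s))) ≤ fs := by
      nlinarith [mul_nonneg (show (0:ℝ) ≤ s - bp - 8*fs by linarith) h0]
    by_contra hq8
    push_neg at hq8
    nlinarith [key, hfspos]
  have hmassA : EE S p (fun v => Mm b Astar v * ind (bp + 8*fs ≤ Uu b Astar v)) ≤ 2*fs := by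
    have hcap : EE S p (fun v => (Mm b Astar v * ind (bp + 8*fs ≤ Uu b Astar v))
        * ind (∀ k ∈ thresh n b bp \ Astar, v k + b k ≤ Uu b Astar v)) ≤ fs := by
      apply hge_util bp
      intro v hv
      by_cases hc1 : bp + 8*fs ≤ Uu b Astar v
      · by_cases hc2 : ∀ k ∈ thresh n b bp \ Astar, v k + b k ≤ Uu b Astar v
        · rw [ind_of hc1, ind_of hc2, mul_one, mul_one]
          rcases lt_or_eq_of_le (Mm_nonneg (b := b) (Astar := Astar) v) with hM | hM
          · exact hcapture bp v hv hM (hUuMmbp v hM) hc2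
          · rw [← hM]; exact hvalnn _ v hv
        · rw [ind_of_not hc2, mul_zero]; exact hvalnn _ v hv
      · rw [ind_of_not hc1, mul_zero, zero_mul]; exact hvalnn _ v hv
    have hmix := mixed_split hdist hindep (insert 0 Astar)
      (fun v => Mm b Astar v * ind (bp + 8*fs ≤ Uu b Astar v))
      (fun v => Uu b Astar v)
      (fun s w => ind (∀ k ∈ thresh n b bp \ Astar, w k + b k ≤ s))
      (fun v w h => by
        show Mm b Astar v * ind (bp + 8*fs ≤ Uu b Astar v)
          = Mm b Astar w * ind (bp + 8*fs ≤ Uu b Astar w)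
        rw [Mm_congr h, Uu_congr h])
      (fun v w h => Uu_congr h)
      (fun s' v w h => hGcongr bp s' v w h)
    have hlow : EE S p (fun v => (7/8) * (Mm b Astar v * ind (bp + 8*fs ≤ Uu b Astar v)))
        ≤ EE S p (fun v => (Mm b Astar v * ind (bp + 8*fs ≤ Uu b Astar v))
            * (∑ w ∈ S, p w * ind (∀ k ∈ thresh n b bp \ Astar, w k + b k ≤ Uu b Astar v))) := by
      apply EE_mono hp
      intro v hv
      by_cases hc1 : bp + 8*fs ≤ Uu b Astar v
      · have hq := hq_top (Uu b Astar v) hc1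
        have hMnn := Mm_nonneg (b := b) (Astar := Astar) v
        have hFnn : 0 ≤ Mm b Astar v * ind (bp + 8*fs ≤ Uu b Astar v) :=
          mul_nonneg hMnn (ind_nonneg _)
        have hqq : (7:ℝ)/8
            ≤ ∑ w ∈ S, p w * ind (∀ k ∈ thresh n b bp \ Astar, w k + b k ≤ Uu b Astar v) :=
          le_trans (by linarith [hq] : (7:ℝ)/8 ≤ EE S p
            (fun w => ind (∀ k ∈ thresh n b bp \ Astar, w k + b k ≤ Uu b Astar v)))
            (le_of_eq rfl)
        nlinarith [hFnn, hqq]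
      · rw [ind_of_not hc1]
        simp
    have final : (7/8) * EE S p (fun v => Mm b Astar v * ind (bp + 8*fs ≤ Uu b Astar v)) ≤ fs := by
      calc (7/8) * EE S p (fun v => Mm b Astar v * ind (bp + 8*fs ≤ Uu b Astar v))
          = EE S p (fun v => (7/8) * (Mm b Astar v * ind (bp + 8*fs ≤ Uu b Astar v))) :=
            (EE_smul _ _).symm
        _ ≤ EE S p (fun v => (Mm b Astar v * ind (bp + 8*fs ≤ Uu b Astar v))
            * (∑ w ∈ S, p w * ind (∀ k ∈ thresh n b bp \ Astar, w k + b k ≤ Uu b Astar v))) := hlow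
        _ = EE S p (fun v => (Mm b Astar v * ind (bp + 8*fs ≤ Uu b Astar v))
            * ind (∀ k ∈ thresh n b bp \ Astar, v k + b k ≤ Uu b Astar v)) := by
              unfold EE
              exact hmix.symm
        _ ≤ fs := hcap
    linarith
  have hEEconst : ∀ c : ℝ, EE S p (fun _ => c) = c := by
    intro c
    unfold EE
    rw [← Finset.sum_mul, h1, one_mul]
  have hmassB : EE S p (fun v => Mm b Astar v
      * ind (Uu b Astar v < bp + 8*fs ∧ Mm b Astar v < Uu b Astar v - bp + 16*fs)) ≤ 17*fs := by
    have hpt : ∀ v ∈ S, Mm b Astar v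
        * ind (Uu b Astar v < bp + 8*fs ∧ Mm b Astar v < Uu b Astar v - bp + 16*fs)
        ≤ max (Uu b Astar v - bp) 0 + 16*fs := by
      intro v hv
      by_cases hc : Uu b Astar v < bp + 8*fs ∧ Mm b Astar v < Uu b Astar v - bp + 16*fs
      · rw [ind_of hc, mul_one]
        have h2 := hUbp v hv
        have h3 := le_max_left (Uu b Astar v - bp) 0
        linarith [hc.2]
      · rw [ind_of_not hc, mul_zero]
        have h3 := le_max_right (Uu b Astar v - bp) 0
        linarith [hfspos]
    calc EE S p (fun v => Mm b Astar v
        * ind (Uu b Astar v < bp + 8*fs ∧ Mm b Astar v < Uu b Astar v - bp + 16*fs))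
        ≤ EE S p (fun v => max (Uu b Astar v - bp) 0 + 16*fs) := EE_mono hp hpt
      _ = EE S p (fun v => max (Uu b Astar v - bp) 0) + EE S p (fun _ => 16*fs) := EE_add _ _
      _ ≤ fs + 16*fs := by
          have h16 := hEEconst (16*fs)
          linarith [hI1]
      _ = 17*fs := by ring
  -- shell machinery
  have hα2 : (1:ℝ) ≤ (α:ℝ) - 2 := by linarith
  have hα2pos : (0:ℝ) < (α:ℝ) - 2 := by linarith
  set w16 : ℕ → ℝ := fun j => 16*fs*((α:ℝ)-2)^j with hw16def
  set tj : ℕ → ℝ := fun j => bp + 8*fs - w16 j with htjdef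
  have hw16pos : ∀ j, 0 < w16 j := by
    intro j
    simp only [hw16def]
    exact mul_pos (by positivity) (pow_pos hα2pos j)
  have hw16ge : ∀ j, 16*fs ≤ w16 j := by
    intro j
    simp only [hw16def]
    nlinarith [one_le_pow₀ hα2 (n := j), hfspos]
  have hw16succ : ∀ j, w16 (j+1) = ((α:ℝ)-2) * w16 j := by
    intro j
    simp only [hw16def]
    rw [pow_succ]
    ring
  have hw16mono : ∀ j k : ℕ, j ≤ k → w16 j ≤ w16 k := by
    intro j k hjk
    simp only [hw16def]
    have := pow_le_pow_right₀ hα2 hjk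
    nlinarith [hfspos]
  have htjle : ∀ j, tj j ≤ bp - 8*fs := by
    intro j
    simp only [htjdef]
    have := hw16ge j
    linarith
  have hgood : ∀ j : ℕ,
      EE S p (fun v => Mm b Astar v * ind ((Uu b Astar v < bp + 8*fs ∧ Uu b Astar v - bp + 16*fs ≤ Mm b Astar v ∧ w16 j ≤ Mm b Astar v ∧ Mm b Astar v < w16 (j+1)) ∧ 1/2 ≤ EE S p (fun u => ind (∀ k ∈ thresh n b (tj j) \ Astar, u k + b k ≤ Uu b Astar v)))) ≤ 2*fs := by
    intro j
    have hcap : EE S p (fun v => (Mm b Astar v * ind ((Uu b Astar v < bp + 8*fs ∧ Uu b Astar v - bp + 16*fs ≤ Mm b Astar v ∧ w16 j ≤ Mm b Astar v ∧ Mm b Astar v < w16 (j+1)) ∧ 1/2 ≤ EE S p (fun u => ind (∀ k ∈ thresh n b (tj j) \ Astar, u k + b k ≤ Uu b Astar v))))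
        * ind (∀ k ∈ thresh n b (tj j) \ Astar, v k + b k ≤ Uu b Astar v)) ≤ fs := by
      apply hge_util (tj j)
      intro v hv
      by_cases hc1 : ((Uu b Astar v < bp + 8*fs ∧ Uu b Astar v - bp + 16*fs ≤ Mm b Astar v ∧ w16 j ≤ Mm b Astar v ∧ Mm b Astar v < w16 (j+1)) ∧ 1/2 ≤ EE S p (fun u => ind (∀ k ∈ thresh n b (tj j) \ Astar, u k + b k ≤ Uu b Astar v)))
      · by_cases hc2 : ∀ k ∈ thresh n b (tj j) \ Astar, v k + b k ≤ Uu b Astar v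
        · rw [ind_of hc1, ind_of hc2, mul_one, mul_one]
          have hM : 0 < Mm b Astar v := lt_of_lt_of_le (hw16pos j) hc1.1.2.2.1
          apply hcapture (tj j) v hv hM ?_ hc2
          have hd1 := hc1.1.1
          have hd2 := hc1.1.2.2.1
          simp only [htjdef]
          linarith
        · rw [ind_of_not hc2, mul_zero]; exact hvalnn _ v hv
      · rw [ind_of_not hc1, mul_zero, zero_mul]; exact hvalnn _ v hv
    have hmix := mixed_split hdist hindep (insert 0 Astar)
      (fun v => Mm b Astar v * ind ((Uu b Astar v < bp + 8*fs ∧ Uu b Astar v - bp + 16*fs ≤ Mm b Astar v ∧ w16 j ≤ Mm b Astar v ∧ Mm b Astar v < w16 (j+1)) ∧ 1/2 ≤ EE S p (fun u => ind (∀ k ∈ thresh n b (tj j) \ Astar, u k + b k ≤ Uu b Astar v))))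
      (fun v => Uu b Astar v)
      (fun s u => ind (∀ k ∈ thresh n b (tj j) \ Astar, u k + b k ≤ s))
      (fun v w h => by
        show Mm b Astar v * ind ((Uu b Astar v < bp + 8*fs ∧ Uu b Astar v - bp + 16*fs ≤ Mm b Astar v ∧ w16 j ≤ Mm b Astar v ∧ Mm b Astar v < w16 (j+1)) ∧ 1/2 ≤ EE S p (fun u => ind (∀ k ∈ thresh n b (tj j) \ Astar, u k + b k ≤ Uu b Astar v))) = Mm b Astar w * ind ((Uu b Astar w < bp + 8*fs ∧ Uu b Astar w - bp + 16*fs ≤ Mm b Astar w ∧ w16 j ≤ Mm b Astar w ∧ Mm b Astar w < w16 (j+1)) ∧ 1/2 ≤ EE S p (fun u => ind (∀ k ∈ thresh n b (tj j) \ Astar, u k + b k ≤ Uu b Astar w)))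
        rw [Mm_congr h, Uu_congr h])
      (fun v w h => Uu_congr h)
      (fun s' v w h => hGcongr (tj j) s' v w h)
    have hlow : EE S p (fun v => (1/2) * (Mm b Astar v * ind ((Uu b Astar v < bp + 8*fs ∧ Uu b Astar v - bp + 16*fs ≤ Mm b Astar v ∧ w16 j ≤ Mm b Astar v ∧ Mm b Astar v < w16 (j+1)) ∧ 1/2 ≤ EE S p (fun u => ind (∀ k ∈ thresh n b (tj j) \ Astar, u k + b k ≤ Uu b Astar v)))))
        ≤ EE S p (fun v => (Mm b Astar v * ind ((Uu b Astar v < bp + 8*fs ∧ Uu b Astar v - bp + 16*fs ≤ Mm b Astar v ∧ w16 j ≤ Mm b Astar v ∧ Mm b Astar v < w16 (j+1)) ∧ 1/2 ≤ EE S p (fun u => ind (∀ k ∈ thresh n b (tj j) \ Astar, u k + b k ≤ Uu b Astar v))))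
            * (∑ u ∈ S, p u * ind (∀ k ∈ thresh n b (tj j) \ Astar, u k + b k ≤ Uu b Astar v))) := by
      apply EE_mono hp
      intro v hv
      by_cases hc1 : ((Uu b Astar v < bp + 8*fs ∧ Uu b Astar v - bp + 16*fs ≤ Mm b Astar v ∧ w16 j ≤ Mm b Astar v ∧ Mm b Astar v < w16 (j+1)) ∧ 1/2 ≤ EE S p (fun u => ind (∀ k ∈ thresh n b (tj j) \ Astar, u k + b k ≤ Uu b Astar v)))
      · have hqq : (1:ℝ)/2 ≤ ∑ u ∈ S, p u * ind (∀ k ∈ thresh n b (tj j) \ Astar,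
            u k + b k ≤ Uu b Astar v) := hc1.2
        have hFnn : 0 ≤ Mm b Astar v * ind ((Uu b Astar v < bp + 8*fs ∧ Uu b Astar v - bp + 16*fs ≤ Mm b Astar v ∧ w16 j ≤ Mm b Astar v ∧ Mm b Astar v < w16 (j+1)) ∧ 1/2 ≤ EE S p (fun u => ind (∀ k ∈ thresh n b (tj j) \ Astar, u k + b k ≤ Uu b Astar v))) :=
          mul_nonneg (Mm_nonneg v) (ind_nonneg _)
        nlinarith [hFnn, hqq]
      · rw [ind_of_not hc1]
        simp
    have final : (1/2) * EE S p (fun v => Mm b Astar v * ind ((Uu b Astar v < bp + 8*fs ∧ Uu b Astar v - bp + 16*fs ≤ Mm b Astar v ∧ w16 j ≤ Mm b Astar v ∧ Mm b Astar v < w16 (j+1)) ∧ 1/2 ≤ EE S p (fun u => ind (∀ k ∈ thresh n b (tj j) \ Astar, u k + b k ≤ Uu b Astar v)))) ≤ fs := by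
      calc (1/2) * EE S p (fun v => Mm b Astar v * ind ((Uu b Astar v < bp + 8*fs ∧ Uu b Astar v - bp + 16*fs ≤ Mm b Astar v ∧ w16 j ≤ Mm b Astar v ∧ Mm b Astar v < w16 (j+1)) ∧ 1/2 ≤ EE S p (fun u => ind (∀ k ∈ thresh n b (tj j) \ Astar, u k + b k ≤ Uu b Astar v))))
          = EE S p (fun v => (1/2) * (Mm b Astar v * ind ((Uu b Astar v < bp + 8*fs ∧ Uu b Astar v - bp + 16*fs ≤ Mm b Astar v ∧ w16 j ≤ Mm b Astar v ∧ Mm b Astar v < w16 (j+1)) ∧ 1/2 ≤ EE S p (fun u => ind (∀ k ∈ thresh n b (tj j) \ Astar, u k + b k ≤ Uu b Astar v))))) := (EE_smul _ _).symm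
        _ ≤ EE S p (fun v => (Mm b Astar v * ind ((Uu b Astar v < bp + 8*fs ∧ Uu b Astar v - bp + 16*fs ≤ Mm b Astar v ∧ w16 j ≤ Mm b Astar v ∧ Mm b Astar v < w16 (j+1)) ∧ 1/2 ≤ EE S p (fun u => ind (∀ k ∈ thresh n b (tj j) \ Astar, u k + b k ≤ Uu b Astar v))))
            * (∑ u ∈ S, p u * ind (∀ k ∈ thresh n b (tj j) \ Astar,
                u k + b k ≤ Uu b Astar v))) := hlow
        _ = EE S p (fun v => (Mm b Astar v * ind ((Uu b Astar v < bp + 8*fs ∧ Uu b Astar v - bp + 16*fs ≤ Mm b Astar v ∧ w16 j ≤ Mm b Astar v ∧ Mm b Astar v < w16 (j+1)) ∧ 1/2 ≤ EE S p (fun u => ind (∀ k ∈ thresh n b (tj j) \ Astar, u k + b k ≤ Uu b Astar v))))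
            * ind (∀ k ∈ thresh n b (tj j) \ Astar, v k + b k ≤ Uu b Astar v)) := by
              unfold EE
              exact hmix.symm
        _ ≤ fs := hcap
    linarith
  have hbadj : ∀ j : ℕ,
      EE S p (fun v => Mm b Astar v * ind ((Uu b Astar v < bp + 8*fs ∧ Uu b Astar v - bp + 16*fs ≤ Mm b Astar v ∧ w16 j ≤ Mm b Astar v ∧ Mm b Astar v < w16 (j+1)) ∧ EE S p (fun u => ind (∀ k ∈ thresh n b (tj j) \ Astar, u k + b k ≤ Uu b Astar v)) < 1/2))
        ≤ 4*((α:ℝ)-2)*fs * EE S p (fun v => ind (bp ≤ UuA b Astar hA v ∧ UuA b Astar hA v < bp + 8*fs ∧ UuA b Astar hA v - bp + 16*fs ≤ MmA b Astar hA v ∧ w16 j ≤ MmA b Astar hA v ∧ MmA b Astar hA v < w16 (j+1) ∧ EE S p (fun u => ind (∀ k ∈ thresh n b (tj j) \ Astar, u k + b k ≤ UuA b Astar hA v)) < 1/2)) := by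
    intro j
    have hstep1 : ∀ v ∈ S, Mm b Astar v * ind ((Uu b Astar v < bp + 8*fs ∧ Uu b Astar v - bp + 16*fs ≤ Mm b Astar v ∧ w16 j ≤ Mm b Astar v ∧ Mm b Astar v < w16 (j+1)) ∧ EE S p (fun u => ind (∀ k ∈ thresh n b (tj j) \ Astar, u k + b k ≤ Uu b Astar v)) < 1/2)
        ≤ (MmA b Astar hA v * ind (bp ≤ UuA b Astar hA v ∧ UuA b Astar hA v < bp + 8*fs ∧ UuA b Astar hA v - bp + 16*fs ≤ MmA b Astar hA v ∧ w16 j ≤ MmA b Astar hA v ∧ MmA b Astar hA v < w16 (j+1) ∧ EE S p (fun u => ind (∀ k ∈ thresh n b (tj j) \ Astar, u k + b k ≤ UuA b Astar hA v)) < 1/2)) * ind (v 0 + b 0 ≤ UuA b Astar hA v) := by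
      intro v hv
      by_cases hc : ((Uu b Astar v < bp + 8*fs ∧ Uu b Astar v - bp + 16*fs ≤ Mm b Astar v ∧ w16 j ≤ Mm b Astar v ∧ Mm b Astar v < w16 (j+1)) ∧ EE S p (fun u => ind (∀ k ∈ thresh n b (tj j) \ Astar, u k + b k ≤ Uu b Astar v)) < 1/2)
      · have hM : 0 < Mm b Astar v := lt_of_lt_of_le (hw16pos j) hc.1.2.2.1
        obtain ⟨hUU, hMM, hu0⟩ := Mm_pos_spec (hA := hA) hM
        have hPsi : (bp ≤ UuA b Astar hA v ∧ UuA b Astar hA v < bp + 8*fs ∧ UuA b Astar hA v - bp + 16*fs ≤ MmA b Astar hA v ∧ w16 j ≤ MmA b Astar hA v ∧ MmA b Astar hA v < w16 (j+1) ∧ EE S p (fun u => ind (∀ k ∈ thresh n b (tj j) \ Astar, u k + b k ≤ UuA b Astar hA v)) < 1/2) := by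
          refine ⟨?_, ?_, ?_, ?_, ?_, ?_⟩
          · rw [← hUU]; exact hUbp v hv
          · rw [← hUU]; exact hc.1.1
          · rw [← hUU, ← hMM]; exact hc.1.2.1
          · rw [← hMM]; exact hc.1.2.2.1
          · rw [← hMM]; exact hc.1.2.2.2
          · rw [← hUU]; exact hc.2
        rw [ind_of hc, ind_of hPsi, ind_of hu0, hMM]
        exact le_of_eq (by ring)
      · rw [ind_of_not hc, mul_zero]
        exact mul_nonneg (mul_nonneg (MmA_nonneg v) (ind_nonneg _)) (ind_nonneg _)
    have hmix := mixed_split hdist hindep Astar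
      (fun v => MmA b Astar hA v * ind (bp ≤ UuA b Astar hA v ∧ UuA b Astar hA v < bp + 8*fs ∧ UuA b Astar hA v - bp + 16*fs ≤ MmA b Astar hA v ∧ w16 j ≤ MmA b Astar hA v ∧ MmA b Astar hA v < w16 (j+1) ∧ EE S p (fun u => ind (∀ k ∈ thresh n b (tj j) \ Astar, u k + b k ≤ UuA b Astar hA v)) < 1/2))
      (fun v => UuA b Astar hA v)
      (fun s u => ind (u 0 + b 0 ≤ s))
      (fun v w h => by
        show MmA b Astar hA v * ind (bp ≤ UuA b Astar hA v ∧ UuA b Astar hA v < bp + 8*fs ∧ UuA b Astar hA v - bp + 16*fs ≤ MmA b Astar hA v ∧ w16 j ≤ MmA b Astar hA v ∧ MmA b Astar hA v < w16 (j+1) ∧ EE S p (fun u => ind (∀ k ∈ thresh n b (tj j) \ Astar, u k + b k ≤ UuA b Astar hA v)) < 1/2) = MmA b Astar hA w * ind (bp ≤ UuA b Astar hA w ∧ UuA b Astar hA w < bp + 8*fs ∧ UuA b Astar hA w - bp + 16*fs ≤ MmA b Astar hA w ∧ w16 j ≤ MmA b Astar hA w ∧ MmA b Astar hA w < w16 (j+1)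 ∧ EE S p (fun u => ind (∀ k ∈ thresh n b (tj j) \ Astar, u k + b k ≤ UuA b Astar hA w)) < 1/2)
        rw [MmA_congr h, UuA_congr h])
      (fun v w h => UuA_congr h)
      (fun s' v w h => by
        show ind (v 0 + b 0 ≤ s') = ind (w 0 + b 0 ≤ s')
        rw [h 0 hopt.1])
    have hfinal3 : EE S p (fun v => (MmA b Astar hA v * ind (bp ≤ UuA b Astar hA v ∧ UuA b Astar hA v < bp + 8*fs ∧ UuA b Astar hA v - bp + 16*fs ≤ MmA b Astar hA v ∧ w16 j ≤ MmA b Astar hA v ∧ MmA b Astar hA v < w16 (j+1) ∧ EE S p (fun u => ind (∀ k ∈ thresh n b (tj j) \ Astar, u k + b k ≤ UuA b Astar hA v)) < 1/2))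
        * (∑ u ∈ S, p u * ind (u 0 + b 0 ≤ UuA b Astar hA v)))
        ≤ EE S p (fun v => (4*((α:ℝ)-2)*fs) * ind (bp ≤ UuA b Astar hA v ∧ UuA b Astar hA v < bp + 8*fs ∧ UuA b Astar hA v - bp + 16*fs ≤ MmA b Astar hA v ∧ w16 j ≤ MmA b Astar hA v ∧ MmA b Astar hA v < w16 (j+1) ∧ EE S p (fun u => ind (∀ k ∈ thresh n b (tj j) \ Astar, u k + b k ≤ UuA b Astar hA v)) < 1/2)) := by
      apply EE_mono hp
      intro v hv
      by_cases hc : (bp ≤ UuA b Astar hA v ∧ UuA b Astar hA v < bp + 8*fs ∧ UuA b Astar hA v - bp + 16*fs ≤ MmA b Astar hA v ∧ w16 j ≤ MmA b Astar hA v ∧ MmA b Astar hA v < w16 (j+1) ∧ EE S p (fun u => ind (∀ k ∈ thresh n b (tj j) \ Astar, u k + b k ≤ UuA b Astar hA v)) < 1/2)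
      · rw [ind_of hc, mul_one, mul_one]
        obtain ⟨hc1, hc2, hc3, hc4, hc5, hc6⟩ := hc
        have hst : 0 ≤ UuA b Astar hA v - tj j := by
          simp only [htjdef]
          have := hw16ge j
          linarith
        have hθb := hθbound (tj j) (UuA b Astar hA v) hst
        have hθnn : 0 ≤ EE S p (fun u => ind (u 0 + b 0 ≤ UuA b Astar hA v)) :=
          EE_ind_nonneg hp _
        have hq6 : 1/2 ≤ 1 - EE S p (fun u => ind (∀ k ∈ thresh n b (tj j) \ Astar,
            u k + b k ≤ UuA b Astar hA v)) := by linarith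
        have hstw : w16 j / 2 ≤ UuA b Astar hA v - tj j := by
          simp only [htjdef]
          have := hw16ge j
          linarith
        have e1 : (w16 j/2) * ((1/2) * EE S p (fun u => ind (u 0 + b 0 ≤ UuA b Astar hA v)))
            ≤ (UuA b Astar hA v - tj j) * ((1 - EE S p (fun u => ind (∀ k ∈ thresh n b (tj j) \ Astar,
                u k + b k ≤ UuA b Astar hA v)))
              * EE S p (fun u => ind (u 0 + b 0 ≤ UuA b Astar hA v))) :=
          mul_le_mul hstw (mul_le_mul_of_nonneg_right hq6 hθnn)
            (mul_nonneg (by norm_num) hθnn) hst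
        have e2 : (w16 j/2) * ((1/2) * EE S p (fun u => ind (u 0 + b 0 ≤ UuA b Astar hA v)))
            ≤ fs := le_trans e1 hθb
        have hθ4 : w16 j * EE S p (fun u => ind (u 0 + b 0 ≤ UuA b Astar hA v)) ≤ 4*fs := by
          nlinarith [e2]
        have hMle : MmA b Astar hA v ≤ ((α:ℝ)-2) * w16 j := by
          rw [← hw16succ j]; exact le_of_lt hc5
        have hMnn := MmA_nonneg (b := b) (hA := hA) v
        have hfin1 : MmA b Astar hA v * EE S p (fun u => ind (u 0 + b 0 ≤ UuA b Astar hA v))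
            ≤ (((α:ℝ)-2) * w16 j) * EE S p (fun u => ind (u 0 + b 0 ≤ UuA b Astar hA v)) :=
          mul_le_mul_of_nonneg_right hMle hθnn
        have hfin2 : (((α:ℝ)-2)) * (w16 j * EE S p (fun u => ind (u 0 + b 0 ≤ UuA b Astar hA v)))
            ≤ (((α:ℝ)-2)) * (4*fs) :=
          mul_le_mul_of_nonneg_left hθ4 (le_of_lt hα2pos)
        calc MmA b Astar hA v * (∑ u ∈ S, p u * ind (u 0 + b 0 ≤ UuA b Astar hA v))
            = MmA b Astar hA v * EE S p (fun u => ind (u 0 + b 0 ≤ UuA b Astar hA v)) := rfl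
          _ ≤ 4*((α:ℝ)-2)*fs := by nlinarith [hfin1, hfin2]
      · rw [ind_of_not hc]
        simp
    calc EE S p (fun v => Mm b Astar v * ind ((Uu b Astar v < bp + 8*fs ∧ Uu b Astar v - bp + 16*fs ≤ Mm b Astar v ∧ w16 j ≤ Mm b Astar v ∧ Mm b Astar v < w16 (j+1)) ∧ EE S p (fun u => ind (∀ k ∈ thresh n b (tj j) \ Astar, u k + b k ≤ Uu b Astar v)) < 1/2))
        ≤ EE S p (fun v => (MmA b Astar hA v * ind (bp ≤ UuA b Astar hA v ∧ UuA b Astar hA v < bp + 8*fs ∧ UuA b Astar hA v - bp + 16*fs ≤ MmA b Astar hA v ∧ w16 j ≤ MmA b Astar hA v ∧ MmA b Astar hA v < w16 (j+1) ∧ EE S p (fun u => ind (∀ k ∈ thresh n b (tj j) \ Astar, u k + b k ≤ UuA b Astar hA v)) < 1/2))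
            * ind (v 0 + b 0 ≤ UuA b Astar hA v)) := EE_mono hp hstep1
      _ = EE S p (fun v => (MmA b Astar hA v * ind (bp ≤ UuA b Astar hA v ∧ UuA b Astar hA v < bp + 8*fs ∧ UuA b Astar hA v - bp + 16*fs ≤ MmA b Astar hA v ∧ w16 j ≤ MmA b Astar hA v ∧ MmA b Astar hA v < w16 (j+1) ∧ EE S p (fun u => ind (∀ k ∈ thresh n b (tj j) \ Astar, u k + b k ≤ UuA b Astar hA v)) < 1/2))
          * (∑ u ∈ S, p u * ind (u 0 + b 0 ≤ UuA b Astar hA v))) := by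
            unfold EE
            exact hmix
      _ ≤ EE S p (fun v => (4*((α:ℝ)-2)*fs) * ind (bp ≤ UuA b Astar hA v ∧ UuA b Astar hA v < bp + 8*fs ∧ UuA b Astar hA v - bp + 16*fs ≤ MmA b Astar hA v ∧ w16 j ≤ MmA b Astar hA v ∧ MmA b Astar hA v < w16 (j+1) ∧ EE S p (fun u => ind (∀ k ∈ thresh n b (tj j) \ Astar, u k + b k ≤ UuA b Astar hA v)) < 1/2)) := hfinal3
      _ = 4*((α:ℝ)-2)*fs * EE S p (fun v => ind (bp ≤ UuA b Astar hA v ∧ UuA b Astar hA v < bp + 8*fs ∧ UuA b Astar hA v - bp + 16*fs ≤ MmA b Astar hA v ∧ w16 j ≤ MmA b Astar hA v ∧ MmA b Astar hA v < w16 (j+1) ∧ EE S p (fun u => ind (∀ k ∈ thresh n b (tj j) \ Astar, u k + b k ≤ UuA b Astar hA v)) < 1/2)) := EE_smul _ _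
  -- lower bound on E[Mm]
  have hEv0 : EE S p (fun v => v 0) ≤ fs := by
    have hne : (Finset.univ.image b).Nonempty :=
      ⟨b 0, Finset.mem_image_of_mem b (Finset.mem_univ 0)⟩
    have hth : thresh n b ((Finset.univ.image b).min' hne - 1) = ∅ := by
      rw [Finset.eq_empty_iff_forall_notMem]
      intro i hi
      have h2 := (mem_thresh.1 hi).2
      have h3 := Finset.min'_le _ (b i) (Finset.mem_image_of_mem b (Finset.mem_univ i))
      linarith
    have he : util S p g (thresh n b ((Finset.univ.image b).min' hne - 1))
        = EE S p (fun v => v 0) := by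
      unfold util EE
      refine Finset.sum_congr rfl fun v _ => ?_
      have hmem := (hg (thresh n b ((Finset.univ.image b).min' hne - 1)) v).1
      rw [hth] at hmem
      rcases Finset.mem_insert.1 hmem with h' | h'
      · show p v * v (g (thresh n b ((Finset.univ.image b).min' hne - 1)) v) = p v * v 0
        rw [hth, h']
      · exact absurd h' (Finset.notMem_empty _)
    rw [← he]
    exact hub _
  have hEMmlow : OPT - fs ≤ EE S p (fun v => Mm b Astar v) := by
    have h0 : OPT ≤ EE S p (fun v => Mm b Astar v + v 0) := by
      have he : OPT = EE S p (fun v => v (g Astar v)) := rfl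
      rw [he]
      apply EE_mono hp
      intro v hv
      have hmem := (hg Astar v).1
      rcases Finset.mem_insert.1 hmem with h0' | hAst
      · rw [h0']
        nlinarith [Mm_nonneg (b := b) (Astar := Astar) v]
      · have hUle : Uu b Astar v ≤ v (g Astar v) + b (g Astar v) := by
          unfold Uu
          apply Finset.sup'_le
          intro i hi
          exact (hg Astar v).2.1 i hi
        have hge := le_Uu (b := b) (Astar := Astar) (v := v) hmem
        have heq : v (g Astar v) + b (g Astar v) = Uu b Astar v := le_antisymm hge hUle
        have hMle := Mm_le hAst heq
        have hv0 := hvnn v hv 0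
        linarith
    rw [EE_add] at h0
    linarith [hEv0]
  -- partition of the mass of Mm
  have hpart : EE S p (fun v => Mm b Astar v)
      ≤ EE S p (fun v => Mm b Astar v * ind (bp + 8*fs ≤ Uu b Astar v))
        + EE S p (fun v => Mm b Astar v * ind (Uu b Astar v < bp + 8*fs ∧ Mm b Astar v < Uu b Astar v - bp + 16*fs))
        + ∑ j ∈ Finset.range (α - 1),
            (EE S p (fun v => Mm b Astar v * ind ((Uu b Astar v < bp + 8*fs ∧ Uu b Astar v - bp + 16*fs ≤ Mm b Astar v ∧ w16 j ≤ Mm b Astar v ∧ Mm b Astar v < w16 (j+1)) ∧ 1/2 ≤ EE S p (fun u => ind (∀ k ∈ thresh n b (tj j) \ Astar, u k + b k ≤ Uu b Astar v)))) + EE S p (fun v => Mm b Astar v * ind ((Uu b Astar v < bp + 8*fs ∧ Uu b Astar v - bp + 16*fs ≤ Mm b Astar v ∧ w16 j ≤ Mm b Astar v ∧ Mm b Astar v < w16 (j+1)) ∧ EE S p (fun u => ind (∀ k ∈ thresh n b (tj j) \ Astar, u k + b k ≤ Uu b Astar v)) < 1/2))) := by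
    have hptw : ∀ v ∈ S, 0 < p v → Mm b Astar v
        ≤ (Mm b Astar v * ind (bp + 8*fs ≤ Uu b Astar v)) + (Mm b Astar v * ind (Uu b Astar v < bp + 8*fs ∧ Mm b Astar v < Uu b Astar v - bp + 16*fs))
          + ∑ j ∈ Finset.range (α - 1), ((Mm b Astar v * ind ((Uu b Astar v < bp + 8*fs ∧ Uu b Astar v - bp + 16*fs ≤ Mm b Astar v ∧ w16 j ≤ Mm b Astar v ∧ Mm b Astar v < w16 (j+1)) ∧ 1/2 ≤ EE S p (fun u => ind (∀ k ∈ thresh n b (tj j) \ Astar, u k + b k ≤ Uu b Astar v)))) + (Mm b Astar v * ind ((Uu b Astar v < bp + 8*fs ∧ Uu b Astar v - bp + 16*fs ≤ Mm b Astar v ∧ w16 j ≤ Mm b Astar v ∧ Mm b Astar v < w16 (j+1)) ∧ EE S p (fun u => ind (∀ k ∈ thresh n b (tj j) \ Astar, u k + b k ≤ Uu b Astar v)) < 1/2))) := by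
      intro v hv hpv
      have hnnA : 0 ≤ Mm b Astar v * ind (bp + 8*fs ≤ Uu b Astar v) := mul_nonneg (Mm_nonneg v) (ind_nonneg _)
      have hnnB : 0 ≤ Mm b Astar v * ind (Uu b Astar v < bp + 8*fs ∧ Mm b Astar v < Uu b Astar v - bp + 16*fs) := mul_nonneg (Mm_nonneg v) (ind_nonneg _)
      have hnnS : 0 ≤ ∑ j ∈ Finset.range (α - 1), ((Mm b Astar v * ind ((Uu b Astar v < bp + 8*fs ∧ Uu b Astar v - bp + 16*fs ≤ Mm b Astar v ∧ w16 j ≤ Mm b Astar v ∧ Mm b Astar v < w16 (j+1)) ∧ 1/2 ≤ EE S p (fun u => ind (∀ k ∈ thresh n b (tj j) \ Astar, u k + b k ≤ Uu b Astar v)))) + (Mm b Astar v * ind ((Uu b Astar v < bp + 8*fs ∧ Uu b Astar v - bp + 16*fs ≤ Mm b Astar v ∧ w16 j ≤ Mm b Astar v ∧ Mm b Astar v < w16 (j+1)) ∧ EE S p (fun u => ind (∀ k ∈ thresh n b (tj j) \ Astar, u k + b k ≤ Uu b Astar v)) < 1/2))) :=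
        Finset.sum_nonneg fun j _ => add_nonneg
          (mul_nonneg (Mm_nonneg v) (ind_nonneg _)) (mul_nonneg (Mm_nonneg v) (ind_nonneg _))
      by_cases hc1 : bp + 8*fs ≤ Uu b Astar v
      · have : Mm b Astar v * ind (bp + 8*fs ≤ Uu b Astar v) = Mm b Astar v := by rw [ind_of hc1, mul_one]
        linarith
      · push_neg at hc1
        by_cases hc2 : Mm b Astar v < Uu b Astar v - bp + 16*fs
        · have : Mm b Astar v * ind (Uu b Astar v < bp + 8*fs ∧ Mm b Astar v < Uu b Astar v - bp + 16*fs) = Mm b Astar v := by rw [ind_of ⟨hc1, hc2⟩, mul_one]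
          linarith
        · push_neg at hc2
          have hM16 : 16*fs ≤ Mm b Astar v := by
            have := hUbp v hv
            linarith
          have hMpos : 0 < Mm b Astar v := by nlinarith [hfspos]
          have hWeq : ((α:ℝ)-2)^(α-1)/(8*(α:ℝ))*OPT = 2*((α:ℝ)-2)^(α-1)*fs := by
            rw [hOPTfs]
            field_simp
            ring
          have hMltW : Mm b Astar v < w16 (α-1) := by
            obtain ⟨jj, hjA, hju, hje⟩ := Mm_attained (ne_of_gt hMpos)
            have hjne : jj ≠ 0 := ne_of_mem_of_not_mem hjA hopt.1
            have hcb := hcon jj hjne v hv hpv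
            rw [hWeq] at hcb
            have hpw : (0:ℝ) ≤ ((α:ℝ)-2)^(α-1) := le_of_lt (pow_pos hα2pos _)
            have : Mm b Astar v < 2*((α:ℝ)-2)^(α-1)*fs := by rw [← hje]; exact hcb
            have hle : 2*((α:ℝ)-2)^(α-1)*fs ≤ 16*fs*((α:ℝ)-2)^(α-1) := by nlinarith [hfspos]
            simp only [hw16def]
            linarith
          have hloc := geom_locate (show (0:ℝ) < 16*fs by linarith) hα2 (α-1)
            (Mm b Astar v) hM16 (by
              have : w16 (α-1) = 16*fs*((α:ℝ)-2)^(α-1) := by simp only [hw16def]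
              linarith)
          obtain ⟨j, hjlt, hjle, hjlt2⟩ := hloc
          have hw1 : w16 j ≤ Mm b Astar v := by simp only [hw16def]; exact hjle
          have hw2 : Mm b Astar v < w16 (j+1) := by simp only [hw16def]; exact hjlt2
          have hD : Uu b Astar v < bp + 8*fs ∧ Uu b Astar v - bp + 16*fs ≤ Mm b Astar v ∧ w16 j ≤ Mm b Astar v ∧ Mm b Astar v < w16 (j+1) := ⟨hc1, hc2, hw1, hw2⟩
          have hjmem : j ∈ Finset.range (α - 1) := Finset.mem_range.2 hjlt
          by_cases hhalf : 1/2 ≤ EE S p (fun u => ind (∀ k ∈ thresh n b (tj j) \ Astar, u k + b k ≤ Uu b Astar v))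
          · have hkey : (Mm b Astar v * ind ((Uu b Astar v < bp + 8*fs ∧ Uu b Astar v - bp + 16*fs ≤ Mm b Astar v ∧ w16 j ≤ Mm b Astar v ∧ Mm b Astar v < w16 (j+1)) ∧ 1/2 ≤ EE S p (fun u => ind (∀ k ∈ thresh n b (tj j) \ Astar, u k + b k ≤ Uu b Astar v)))) = Mm b Astar v := by rw [ind_of ⟨hD, hhalf⟩, mul_one]
            have hsingle : (Mm b Astar v * ind ((Uu b Astar v < bp + 8*fs ∧ Uu b Astar v - bp + 16*fs ≤ Mm b Astar v ∧ w16 j ≤ Mm b Astar v ∧ Mm b Astar v < w16 (j+1)) ∧ 1/2 ≤ EE S p (fun u => ind (∀ k ∈ thresh n b (tj j) \ Astar, u k + b k ≤ Uu b Astar v)))) + (Mm b Astar v * ind ((Uu b Astar v < bp + 8*fs ∧ Uu b Astar v - bp + 16*fs ≤ Mm b Astar v ∧ w16 j ≤ Mm b Astar v ∧ Mm b Astar v < w16 (j+1)) ∧ EE S p (fun u => ind (∀ k ∈ thresh n b (tj j) \ Astar, u k + b k ≤ Uu b Astar v)) < 1/2))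
                ≤ ∑ j ∈ Finset.range (α - 1), ((Mm b Astar v * ind ((Uu b Astar v < bp + 8*fs ∧ Uu b Astar v - bp + 16*fs ≤ Mm b Astar v ∧ w16 j ≤ Mm b Astar v ∧ Mm b Astar v < w16 (j+1)) ∧ 1/2 ≤ EE S p (fun u => ind (∀ k ∈ thresh n b (tj j) \ Astar, u k + b k ≤ Uu b Astar v)))) + (Mm b Astar v * ind ((Uu b Astar v < bp + 8*fs ∧ Uu b Astar v - bp + 16*fs ≤ Mm b Astar v ∧ w16 j ≤ Mm b Astar v ∧ Mm b Astar v < w16 (j+1)) ∧ EE S p (fun u => ind (∀ k ∈ thresh n b (tj j) \ Astar, u k + b k ≤ Uu b Astar v)) < 1/2))) :=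
              Finset.single_le_sum (f := fun j => (Mm b Astar v * ind ((Uu b Astar v < bp + 8*fs ∧ Uu b Astar v - bp + 16*fs ≤ Mm b Astar v ∧ w16 j ≤ Mm b Astar v ∧ Mm b Astar v < w16 (j+1)) ∧ 1/2 ≤ EE S p (fun u => ind (∀ k ∈ thresh n b (tj j) \ Astar, u k + b k ≤ Uu b Astar v)))) + (Mm b Astar v * ind ((Uu b Astar v < bp + 8*fs ∧ Uu b Astar v - bp + 16*fs ≤ Mm b Astar v ∧ w16 j ≤ Mm b Astar v ∧ Mm b Astar v < w16 (j+1)) ∧ EE S p (fun u => ind (∀ k ∈ thresh n b (tj j) \ Astar, u k + b k ≤ Uu b Astar v)) < 1/2)))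
                (fun j _ => add_nonneg (mul_nonneg (Mm_nonneg v) (ind_nonneg _))
                  (mul_nonneg (Mm_nonneg v) (ind_nonneg _))) hjmem
            have hnnbad : 0 ≤ Mm b Astar v * ind ((Uu b Astar v < bp + 8*fs ∧ Uu b Astar v - bp + 16*fs ≤ Mm b Astar v ∧ w16 j ≤ Mm b Astar v ∧ Mm b Astar v < w16 (j+1)) ∧ EE S p (fun u => ind (∀ k ∈ thresh n b (tj j) \ Astar, u k + b k ≤ Uu b Astar v)) < 1/2) := mul_nonneg (Mm_nonneg v) (ind_nonneg _)
            linarith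
          · push_neg at hhalf
            have hkey : (Mm b Astar v * ind ((Uu b Astar v < bp + 8*fs ∧ Uu b Astar v - bp + 16*fs ≤ Mm b Astar v ∧ w16 j ≤ Mm b Astar v ∧ Mm b Astar v < w16 (j+1)) ∧ EE S p (fun u => ind (∀ k ∈ thresh n b (tj j) \ Astar, u k + b k ≤ Uu b Astar v)) < 1/2)) = Mm b Astar v := by rw [ind_of ⟨hD, hhalf⟩, mul_one]
            have hsingle : (Mm b Astar v * ind ((Uu b Astar v < bp + 8*fs ∧ Uu b Astar v - bp + 16*fs ≤ Mm b Astar v ∧ w16 j ≤ Mm b Astar v ∧ Mm b Astar v < w16 (j+1)) ∧ 1/2 ≤ EE S p (fun u => ind (∀ k ∈ thresh n b (tj j) \ Astar, u k + b k ≤ Uu b Astar v)))) + (Mm b Astar v * ind ((Uu b Astar v < bp + 8*fs ∧ Uu b Astar v - bp + 16*fs ≤ Mm b Astar v ∧ w16 j ≤ Mm b Astar v ∧ Mm b Astar v < w16 (j+1)) ∧ EE S p (fun u => ind (∀ k ∈ thresh n b (tj j) \ Astar, u k + b k ≤ Uu b Astar v)) < 1/2))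
                ≤ ∑ j ∈ Finset.range (α - 1), ((Mm b Astar v * ind ((Uu b Astar v < bp + 8*fs ∧ Uu b Astar v - bp + 16*fs ≤ Mm b Astar v ∧ w16 j ≤ Mm b Astar v ∧ Mm b Astar v < w16 (j+1)) ∧ 1/2 ≤ EE S p (fun u => ind (∀ k ∈ thresh n b (tj j) \ Astar, u k + b k ≤ Uu b Astar v)))) + (Mm b Astar v * ind ((Uu b Astar v < bp + 8*fs ∧ Uu b Astar v - bp + 16*fs ≤ Mm b Astar v ∧ w16 j ≤ Mm b Astar v ∧ Mm b Astar v < w16 (j+1)) ∧ EE S p (fun u => ind (∀ k ∈ thresh n b (tj j) \ Astar, u k + b k ≤ Uu b Astar v)) < 1/2))) :=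
              Finset.single_le_sum (f := fun j => (Mm b Astar v * ind ((Uu b Astar v < bp + 8*fs ∧ Uu b Astar v - bp + 16*fs ≤ Mm b Astar v ∧ w16 j ≤ Mm b Astar v ∧ Mm b Astar v < w16 (j+1)) ∧ 1/2 ≤ EE S p (fun u => ind (∀ k ∈ thresh n b (tj j) \ Astar, u k + b k ≤ Uu b Astar v)))) + (Mm b Astar v * ind ((Uu b Astar v < bp + 8*fs ∧ Uu b Astar v - bp + 16*fs ≤ Mm b Astar v ∧ w16 j ≤ Mm b Astar v ∧ Mm b Astar v < w16 (j+1)) ∧ EE S p (fun u => ind (∀ k ∈ thresh n b (tj j) \ Astar, u k + b k ≤ Uu b Astar v)) < 1/2)))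
                (fun j _ => add_nonneg (mul_nonneg (Mm_nonneg v) (ind_nonneg _))
                  (mul_nonneg (Mm_nonneg v) (ind_nonneg _))) hjmem
            have hnngood : 0 ≤ Mm b Astar v * ind ((Uu b Astar v < bp + 8*fs ∧ Uu b Astar v - bp + 16*fs ≤ Mm b Astar v ∧ w16 j ≤ Mm b Astar v ∧ Mm b Astar v < w16 (j+1)) ∧ 1/2 ≤ EE S p (fun u => ind (∀ k ∈ thresh n b (tj j) \ Astar, u k + b k ≤ Uu b Astar v))) := mul_nonneg (Mm_nonneg v) (ind_nonneg _)
            linarith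
    calc EE S p (fun v => Mm b Astar v)
        ≤ EE S p (fun v => (Mm b Astar v * ind (bp + 8*fs ≤ Uu b Astar v)) + (Mm b Astar v * ind (Uu b Astar v < bp + 8*fs ∧ Mm b Astar v < Uu b Astar v - bp + 16*fs))
            + ∑ j ∈ Finset.range (α - 1), ((Mm b Astar v * ind ((Uu b Astar v < bp + 8*fs ∧ Uu b Astar v - bp + 16*fs ≤ Mm b Astar v ∧ w16 j ≤ Mm b Astar v ∧ Mm b Astar v < w16 (j+1)) ∧ 1/2 ≤ EE S p (fun u => ind (∀ k ∈ thresh n b (tj j) \ Astar, u k + b k ≤ Uu b Astar v)))) + (Mm b Astar v * ind ((Uu b Astar v < bp + 8*fs ∧ Uu b Astar v - bp + 16*fs ≤ Mm b Astar v ∧ w16 j ≤ Mm b Astar v ∧ Mm b Astar v < w16 (j+1)) ∧ EE S p (fun u => ind (∀ k ∈ thresh n b (tj j) \ Astar, u k + b k ≤ Uu b Astar v)) < 1/2)))) := by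
          unfold EE
          apply Finset.sum_le_sum
          intro v hv
          rcases lt_or_eq_of_le (hp v hv) with hpv | hpv
          · exact mul_le_mul_of_nonneg_left (hptw v hv hpv) (hp v hv)
          · rw [← hpv, zero_mul, zero_mul]
      _ = EE S p (fun v => (Mm b Astar v * ind (bp + 8*fs ≤ Uu b Astar v)) + (Mm b Astar v * ind (Uu b Astar v < bp + 8*fs ∧ Mm b Astar v < Uu b Astar v - bp + 16*fs)))
            + EE S p (fun v => ∑ j ∈ Finset.range (α - 1), ((Mm b Astar v * ind ((Uu b Astar v < bp + 8*fs ∧ Uu b Astar v - bp + 16*fs ≤ Mm b Astar v ∧ w16 j ≤ Mm b Astar v ∧ Mm b Astar v < w16 (j+1)) ∧ 1/2 ≤ EE S p (fun u => ind (∀ k ∈ thresh n b (tj j) \ Astar, u k + b k ≤ Uu b Astar v)))) + (Mm b Astar v * ind ((Uu b Astar v < bp + 8*fs ∧ Uu b Astar v - bp + 16*fs ≤ Mm b Astar v ∧ w16 j ≤ Mm b Astar v ∧ Mm b Astar v < w16 (j+1)) ∧ EE S p (fun u => ind (∀ k ∈ thresh n b (tj j) \ Astar, u k + b k ≤ Uu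 b Astar v)) < 1/2)))) :=
          EE_add _ _
      _ = EE S p (fun v => Mm b Astar v * ind (bp + 8*fs ≤ Uu b Astar v)) + EE S p (fun v => Mm b Astar v * ind (Uu b Astar v < bp + 8*fs ∧ Mm b Astar v < Uu b Astar v - bp + 16*fs))
            + ∑ j ∈ Finset.range (α - 1),
              (EE S p (fun v => Mm b Astar v * ind ((Uu b Astar v < bp + 8*fs ∧ Uu b Astar v - bp + 16*fs ≤ Mm b Astar v ∧ w16 j ≤ Mm b Astar v ∧ Mm b Astar v < w16 (j+1)) ∧ 1/2 ≤ EE S p (fun u => ind (∀ k ∈ thresh n b (tj j) \ Astar, u k + b k ≤ Uu b Astar v)))) + EE S p (fun v => Mm b Astar v * ind ((Uu b Astar v < bp + 8*fs ∧ Uu b Astar v - bp + 16*fs ≤ Mm b Astar v ∧ w16 j ≤ Mm b Astar v ∧ Mm b Astar v < w16 (j+1)) ∧ EE S p (fun u => ind (∀ k ∈ thresh n b (tj j) \ Astar, u k + b k ≤ Uu b Astar v)) < 1/2))) := by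
          rw [EE_add, EE_finsum]
          congr 1
          exact Finset.sum_congr rfl fun j _ => EE_add _ _
  -- sum of Psi probabilities is at most one
  have hΨsum : ∑ j ∈ Finset.range (α-1), EE S p (fun v => ind (bp ≤ UuA b Astar hA v ∧ UuA b Astar hA v < bp + 8*fs ∧ UuA b Astar hA v - bp + 16*fs ≤ MmA b Astar hA v ∧ w16 j ≤ MmA b Astar hA v ∧ MmA b Astar hA v < w16 (j+1) ∧ EE S p (fun u => ind (∀ k ∈ thresh n b (tj j) \ Astar, u k + b k ≤ UuA b Astar hA v)) < 1/2)) ≤ 1 := by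
    have heq := EE_finsum (S := S) (p := p) (Finset.range (α-1)) (fun j v => ind (bp ≤ UuA b Astar hA v ∧ UuA b Astar hA v < bp + 8*fs ∧ UuA b Astar hA v - bp + 16*fs ≤ MmA b Astar hA v ∧ w16 j ≤ MmA b Astar hA v ∧ MmA b Astar hA v < w16 (j+1) ∧ EE S p (fun u => ind (∀ k ∈ thresh n b (tj j) \ Astar, u k + b k ≤ UuA b Astar hA v)) < 1/2))
    rw [← heq]
    have hptw : ∀ v ∈ S, (∑ j ∈ Finset.range (α-1), ind (bp ≤ UuA b Astar hA v ∧ UuA b Astar hA v < bp + 8*fs ∧ UuA b Astar hA v - bp + 16*fs ≤ MmA b Astar hA v ∧ w16 j ≤ MmA b Astar hA v ∧ MmA b Astar hA v < w16 (j+1) ∧ EE S p (fun u => ind (∀ k ∈ thresh n b (tj j) \ Astar, u k + b k ≤ UuA b Astar hA v)) < 1/2)) ≤ (1:ℝ) := by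
      intro v _
      by_cases hex : ∃ j ∈ Finset.range (α-1), (bp ≤ UuA b Astar hA v ∧ UuA b Astar hA v < bp + 8*fs ∧ UuA b Astar hA v - bp + 16*fs ≤ MmA b Astar hA v ∧ w16 j ≤ MmA b Astar hA v ∧ MmA b Astar hA v < w16 (j+1) ∧ EE S p (fun u => ind (∀ k ∈ thresh n b (tj j) \ Astar, u k + b k ≤ UuA b Astar hA v)) < 1/2)
      · obtain ⟨j0, hj0, hP0⟩ := hex
        have hz : ∀ j ∈ Finset.range (α-1), j ≠ j0 → ind (bp ≤ UuA b Astar hA v ∧ UuA b Astar hA v < bp + 8*fs ∧ UuA b Astar hA v - bp + 16*fs ≤ MmA b Astar hA v ∧ w16 j ≤ MmA b Astar hA v ∧ MmA b Astar hA v < w16 (j+1) ∧ EE S p (fun u => ind (∀ k ∈ thresh n b (tj j) \ Astar, u k + b k ≤ UuA b Astar hA v)) < 1/2) = 0 := by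
          intro j hj hne
          apply ind_of_not
          intro hP'
          rcases lt_or_gt_of_ne hne with hlt | hgt
          · have hmono := hw16mono (j+1) j0 (Nat.succ_le_of_lt hlt)
            have ha1 := hP'.2.2.2.2.1
            have ha2 : w16 j0 ≤ MmA b Astar hA v := hP0.2.2.2.1
            linarith
          · have hmono := hw16mono (j0+1) j (Nat.succ_le_of_lt hgt)
            have ha1 : MmA b Astar hA v < w16 (j0+1) := hP0.2.2.2.2.1
            have ha2 := hP'.2.2.2.1
            linarith
        rw [Finset.sum_eq_single_of_mem j0 hj0 hz]
        exact ind_le_one _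
      · rw [Finset.sum_eq_zero fun j hj => ind_of_not (fun hP => hex ⟨j, hj, hP⟩)]
        norm_num
    have hm := EE_mono hp hptw
    rw [EE_one h1] at hm
    exact hm
  -- final numeric contradiction
  have hgoodsum : ∑ j ∈ Finset.range (α-1), EE S p (fun v => Mm b Astar v * ind ((Uu b Astar v < bp + 8*fs ∧ Uu b Astar v - bp + 16*fs ≤ Mm b Astar v ∧ w16 j ≤ Mm b Astar v ∧ Mm b Astar v < w16 (j+1)) ∧ 1/2 ≤ EE S p (fun u => ind (∀ k ∈ thresh n b (tj j) \ Astar, u k + b k ≤ Uu b Astar v))))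
      ≤ ((α:ℝ)-1) * (2*fs) := by
    calc ∑ j ∈ Finset.range (α-1), EE S p (fun v => Mm b Astar v * ind ((Uu b Astar v < bp + 8*fs ∧ Uu b Astar v - bp + 16*fs ≤ Mm b Astar v ∧ w16 j ≤ Mm b Astar v ∧ Mm b Astar v < w16 (j+1)) ∧ 1/2 ≤ EE S p (fun u => ind (∀ k ∈ thresh n b (tj j) \ Astar, u k + b k ≤ Uu b Astar v))))
        ≤ ∑ _j ∈ Finset.range (α-1), 2*fs := Finset.sum_le_sum fun j _ => hgood j
      _ = ((α-1 : ℕ):ℝ) * (2*fs) := by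
          rw [Finset.sum_const, Finset.card_range, nsmul_eq_mul]
      _ ≤ ((α:ℝ)-1) * (2*fs) := by
          have h1' : (1:ℕ) ≤ α := by omega
          rw [Nat.cast_sub h1']
          norm_num
  have hbadsum : ∑ j ∈ Finset.range (α-1), EE S p (fun v => Mm b Astar v * ind ((Uu b Astar v < bp + 8*fs ∧ Uu b Astar v - bp + 16*fs ≤ Mm b Astar v ∧ w16 j ≤ Mm b Astar v ∧ Mm b Astar v < w16 (j+1)) ∧ EE S p (fun u => ind (∀ k ∈ thresh n b (tj j) \ Astar, u k + b k ≤ Uu b Astar v)) < 1/2))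
      ≤ 4*((α:ℝ)-2)*fs := by
    calc ∑ j ∈ Finset.range (α-1), EE S p (fun v => Mm b Astar v * ind ((Uu b Astar v < bp + 8*fs ∧ Uu b Astar v - bp + 16*fs ≤ Mm b Astar v ∧ w16 j ≤ Mm b Astar v ∧ Mm b Astar v < w16 (j+1)) ∧ EE S p (fun u => ind (∀ k ∈ thresh n b (tj j) \ Astar, u k + b k ≤ Uu b Astar v)) < 1/2))
        ≤ ∑ j ∈ Finset.range (α-1), 4*((α:ℝ)-2)*fs * EE S p (fun v => ind (bp ≤ UuA b Astar hA v ∧ UuA b Astar hA v < bp + 8*fs ∧ UuA b Astar hA v - bp + 16*fs ≤ MmA b Astar hA v ∧ w16 j ≤ MmA b Astar hA v ∧ MmA b Astar hA v < w16 (j+1) ∧ EE S p (fun u => ind (∀ k ∈ thresh n b (tj j) \ Astar, u k + b k ≤ UuA b Astar hA v)) < 1/2)) :=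
          Finset.sum_le_sum fun j _ => hbadj j
      _ = 4*((α:ℝ)-2)*fs * ∑ j ∈ Finset.range (α-1), EE S p (fun v => ind (bp ≤ UuA b Astar hA v ∧ UuA b Astar hA v < bp + 8*fs ∧ UuA b Astar hA v - bp + 16*fs ≤ MmA b Astar hA v ∧ w16 j ≤ MmA b Astar hA v ∧ MmA b Astar hA v < w16 (j+1) ∧ EE S p (fun u => ind (∀ k ∈ thresh n b (tj j) \ Astar, u k + b k ≤ UuA b Astar hA v)) < 1/2)) := by
          rw [Finset.mul_sum]
      _ ≤ 4*((α:ℝ)-2)*fs * 1 :=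
          mul_le_mul_of_nonneg_left hΨsum (by positivity)
      _ = 4*((α:ℝ)-2)*fs := by ring
  have hsplitsum : ∑ j ∈ Finset.range (α - 1),
      (EE S p (fun v => Mm b Astar v * ind ((Uu b Astar v < bp + 8*fs ∧ Uu b Astar v - bp + 16*fs ≤ Mm b Astar v ∧ w16 j ≤ Mm b Astar v ∧ Mm b Astar v < w16 (j+1)) ∧ 1/2 ≤ EE S p (fun u => ind (∀ k ∈ thresh n b (tj j) \ Astar, u k + b k ≤ Uu b Astar v)))) + EE S p (fun v => Mm b Astar v * ind ((Uu b Astar v < bp + 8*fs ∧ Uu b Astar v - bp + 16*fs ≤ Mm b Astar v ∧ w16 j ≤ Mm b Astar v ∧ Mm b Astar v < w16 (j+1)) ∧ EE S p (fun u => ind (∀ k ∈ thresh n b (tj j) \ Astar, u k + b k ≤ Uu b Astar v)) < 1/2)))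
      = (∑ j ∈ Finset.range (α-1), EE S p (fun v => Mm b Astar v * ind ((Uu b Astar v < bp + 8*fs ∧ Uu b Astar v - bp + 16*fs ≤ Mm b Astar v ∧ w16 j ≤ Mm b Astar v ∧ Mm b Astar v < w16 (j+1)) ∧ 1/2 ≤ EE S p (fun u => ind (∀ k ∈ thresh n b (tj j) \ Astar, u k + b k ≤ Uu b Astar v)))))
        + ∑ j ∈ Finset.range (α-1), EE S p (fun v => Mm b Astar v * ind ((Uu b Astar v < bp + 8*fs ∧ Uu b Astar v - bp + 16*fs ≤ Mm b Astar v ∧ w16 j ≤ Mm b Astar v ∧ Mm b Astar v < w16 (j+1)) ∧ EE S p (fun u => ind (∀ k ∈ thresh n b (tj j) \ Astar, u k + b k ≤ Uu b Astar v)) < 1/2)) :=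
    Finset.sum_add_distrib
  have hfinal : OPT - fs ≤ 2*fs + 17*fs + (((α:ℝ)-1) * (2*fs) + 4*((α:ℝ)-2)*fs) := by
    have := hpart
    rw [hsplitsum] at this
    linarith [hEMmlow, hmassA, hmassB, hgoodsum, hbadsum]
  rw [hOPTfs] at hfinal
  nlinarith [hfspos, hα4]

end DelegProof

/-- **parametrized analysis.** With mutually independent values
(the outside option may be randomized), if every action of the optimal menu `A*`
is selected with positive probability and, for some integer `α ≥ 4`, every
threshold menu satisfies `f(A*) > 16·α·f(A_t)`, then some action's value is,
with positive probability, at least `((α−2)^(α−1) / (8α)) · f(A*)`. -/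
theorem parametrized_threshold_approximation {n : ℕ} (b : Fin (n + 1) → ℝ)
    (S : Finset (Profile n)) (p : Profile n → ℝ)
    (hdist : ValidDist S p) (hindep : IndepValues S p)
    (g : Finset (Fin (n + 1)) → Profile n → Fin (n + 1)) (hg : IsChoice n b g)
    (Astar : Finset (Fin (n + 1))) (hopt : OptimalMenu S p g Astar)
    (hsel : ∀ i ∈ Astar, 0 < ∑ v ∈ S.filter fun v => g Astar v = i, p v)
    (α : ℕ) (hα : 4 ≤ α)
    (hbad : ∀ t : ℝ, 16 * (α : ℝ) * util S p g (thresh n b t) < util S p g Astar) :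
    ∃ i : Fin (n + 1), i ≠ 0 ∧ ∃ v ∈ S, 0 < p v ∧
      ((α : ℝ) - 2) ^ (α - 1) / (8 * (α : ℝ)) * util S p g Astar ≤ v i := by
  by_contra hcon
  push_neg at hcon
  rcases Finset.eq_empty_or_nonempty Astar with hAe | hA
  · have hne : (Finset.univ.image b).Nonempty :=
      ⟨b 0, Finset.mem_image_of_mem b (Finset.mem_univ 0)⟩
    have hth : thresh n b ((Finset.univ.image b).min' hne - 1) = ∅ := by
      rw [Finset.eq_empty_iff_forall_notMem]
      intro i hi
      have h2 := (DelegProof.mem_thresh.1 hi).2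
      have h3 := Finset.min'_le _ (b i) (Finset.mem_image_of_mem b (Finset.mem_univ i))
      linarith
    have h := hbad ((Finset.univ.image b).min' hne - 1)
    rw [hth, ← hAe] at h
    have hnn : 0 ≤ util S p g Astar :=
      Finset.sum_nonneg fun v hv => mul_nonneg (hdist.1 v hv) (hdist.2.2 v hv _)
    have hα4 : (4:ℝ) ≤ (α:ℝ) := by exact_mod_cast hα
    nlinarith
  · exact DelegProof.main_contra b S p hdist hindep g hg Astar hopt hA α hα hbad hcon
end

section
/- Suppose the value profile v is drawn from a discrete distribution with finitely many realizations, each occurring with probability at least p_min, where 0 < p_min ≤ 1/2 (values may be arbitrarily correlated; no outside option). Then there exists a threshold t ∈ ℝ such that 4·log₂(1/p_min) · f(A_t) ≥ f(A*); i.e., the best threshold policy is a 4·log(p_min^{−1})-approximation to the optimal delegation set. -/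
open Finset

lemma chain_sum_le {ι : Type*} [DecidableEq ι] (p d : ι → ℝ) (pmin T : ℝ)
    (hpmin : 0 < pmin) (hT : 0 ≤ T) :
    ∀ s : Finset ι, (∀ v ∈ s, pmin ≤ p v) → (∀ v ∈ s, 0 ≤ d v) →
    (∀ v ∈ s, d v * (∑ w ∈ s.filter (fun w => d v ≤ d w), p w) ≤ T) →
    ∑ v ∈ s, p v * d v ≤ T * (1 + Real.log ((∑ v ∈ s, p v) / pmin)) := by
  classical
  intro s
  induction s using Finset.strongInduction with
  | _ s ih =>
    intro hp hd hcon
    rcases s.eq_empty_or_nonempty with rfl | hs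
    · simpa [Real.log_zero] using hT
    obtain ⟨a, has, hmin⟩ := s.exists_min_image d hs
    set rest := s.erase a with hrest
    have hsub : rest ⊆ s := erase_subset _ _
    have hpnn : ∀ v ∈ s, 0 ≤ p v := fun v hv => le_trans hpmin.le (hp v hv)
    have hQ'nn : 0 ≤ ∑ v ∈ rest, p v :=
      Finset.sum_nonneg fun v hv => hpnn v (hsub hv)
    have hsplit : ∑ v ∈ rest, p v + p a = ∑ v ∈ s, p v :=
      Finset.sum_erase_add s p has
    have hQpos : 0 < ∑ v ∈ s, p v := by
      have := hp a has; linarith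
    have hfilt : s.filter (fun w => d a ≤ d w) = s :=
      Finset.filter_true_of_mem (fun w hw => hmin w hw)
    have hQa : d a * ∑ v ∈ s, p v ≤ T := by
      have := hcon a has; rwa [hfilt] at this
    have hsplitd : ∑ v ∈ rest, p v * d v + p a * d a = ∑ v ∈ s, p v * d v :=
      Finset.sum_erase_add s _ has
    have hterm : p a * d a ≤ T * (p a / ∑ v ∈ s, p v) := by
      have hda : d a ≤ T / ∑ v ∈ s, p v := (le_div_iff₀ hQpos).mpr hQa
      have := mul_le_mul_of_nonneg_left hda (hpnn a has)
      calc p a * d a ≤ p a * (T / ∑ v ∈ s, p v) := this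
        _ = T * (p a / ∑ v ∈ s, p v) := by ring
    rcases rest.eq_empty_or_nonempty with hre | hrne
    · -- s = {a}
      rw [hre] at hsplit hsplitd
      simp at hsplit hsplitd
      have hlog : 0 ≤ Real.log ((∑ v ∈ s, p v) / pmin) := by
        apply Real.log_nonneg
        rw [le_div_iff₀ hpmin]
        rw [← hsplit]; linarith [hp a has]
      have : p a * d a ≤ T := by
        calc p a * d a = d a * ∑ v ∈ s, p v := by rw [← hsplit]; ring
          _ ≤ T := hQa
      rw [← hsplitd]
      nlinarith
    · -- inductive step
      have hQ'pos : 0 < ∑ v ∈ rest, p v := by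
        obtain ⟨w, hw⟩ := hrne
        have h1 : pmin ≤ p w := hp w (hsub hw)
        have h2 : ∑ v ∈ rest.erase w, p v + p w = ∑ v ∈ rest, p v :=
          Finset.sum_erase_add rest p hw
        have h3 : 0 ≤ ∑ v ∈ rest.erase w, p v :=
          Finset.sum_nonneg fun v hv => hpnn v (hsub (erase_subset _ _ hv))
        linarith
      have hIH : ∑ v ∈ rest, p v * d v
          ≤ T * (1 + Real.log ((∑ v ∈ rest, p v) / pmin)) := by
        apply ih rest (Finset.erase_ssubset has)
        · exact fun v hv => hp v (hsub hv)
        · exact fun v hv => hd v (hsub hv)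
        · intro v hv
          calc d v * ∑ w ∈ rest.filter (fun w => d v ≤ d w), p w
              ≤ d v * ∑ w ∈ s.filter (fun w => d v ≤ d w), p w := by
                apply mul_le_mul_of_nonneg_left _ (hd v (hsub hv))
                apply Finset.sum_le_sum_of_subset_of_nonneg
                  (Finset.filter_subset_filter _ hsub)
                exact fun w hw _ => hpnn w (Finset.mem_of_mem_filter w hw)
            _ ≤ T := hcon v (hsub hv)
      -- key log inequality
      have hkey : p a / ∑ v ∈ s, p v
          ≤ Real.log (∑ v ∈ s, p v) - Real.log (∑ v ∈ rest, p v) := by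
        have h1 : Real.log ((∑ v ∈ rest, p v) / ∑ v ∈ s, p v)
            ≤ (∑ v ∈ rest, p v) / ∑ v ∈ s, p v - 1 :=
          Real.log_le_sub_one_of_pos (div_pos hQ'pos hQpos)
        rw [Real.log_div (ne_of_gt hQ'pos) (ne_of_gt hQpos)] at h1
        have h2 : (∑ v ∈ rest, p v) / ∑ v ∈ s, p v - 1
            = -(p a / ∑ v ∈ s, p v) := by
          field_simp
          linarith
        rw [h2] at h1; linarith
    -- combine
      have hlogQ : Real.log ((∑ v ∈ s, p v) / pmin)
          = Real.log (∑ v ∈ s, p v) - Real.log pmin :=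
        Real.log_div (ne_of_gt hQpos) (ne_of_gt hpmin)
      have hlogQ' : Real.log ((∑ v ∈ rest, p v) / pmin)
          = Real.log (∑ v ∈ rest, p v) - Real.log pmin :=
        Real.log_div (ne_of_gt hQ'pos) (ne_of_gt hpmin)
      have hkeyT := mul_le_mul_of_nonneg_left hkey hT
      rw [← hsplitd]
      rw [hlogQ]; rw [hlogQ'] at hIH
      nlinarith

/-- **correlated values.** If every realized value profile has
probability at least `p_min` with `0 < p_min ≤ 1/2`, then some threshold menu is a
`4·log₂(1/p_min)`-approximation to the optimal menu. -/
theorem correlated_threshold_approximation {n : ℕ} (b : Fin n → ℝ)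
    (S : Finset (Fin n → ℝ)) (p : (Fin n → ℝ) → ℝ) (hdist : ValidDistN S p)
    (pmin : ℝ) (hpmin : 0 < pmin) (hpmin2 : pmin ≤ 1 / 2)
    (hmass : ∀ v ∈ S, p v ≠ 0 → pmin ≤ p v)
    (g : Finset (Fin n) → (Fin n → ℝ) → Fin n) (hg : IsChoiceN n b g)
    (Astar : Finset (Fin n)) (hA : Astar.Nonempty)
    (hopt : ∀ A : Finset (Fin n), A.Nonempty → utilN S p g A ≤ utilN S p g Astar) :
    ∃ t : ℝ, (threshN n b t).Nonempty ∧
      utilN S p g Astar ≤ 4 * Real.logb 2 (1 / pmin) * utilN S p g (threshN n b t) := by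
  classical
  obtain ⟨hpn, hpsum, hvnn⟩ := hdist
  obtain ⟨j₀, hj₀, hj₀max⟩ := Astar.exists_max_image b hA
  set B := b j₀ with hBdef
  have hmemthresh : ∀ (t : ℝ) (k : Fin n), b k ≤ t → k ∈ threshN n b t := by
    intro t k hk; simp [threshN, hk]
  have hiA : ∀ v, g Astar v ∈ Astar := fun v => (hg Astar v hA).1
  have hβB : ∀ v, b (g Astar v) ≤ B := fun v => hj₀max _ (hiA v)
  have hcB : ∀ v ∈ S, B ≤ v (g Astar v) + b (g Astar v) := by
    intro v hv
    have h1 := (hg Astar v hA).2.1 j₀ hj₀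
    have h2 := hvnn v hv j₀
    linarith
  have cover : ∀ v ∈ S, ∀ t : ℝ, b (g Astar v) ≤ t →
      v (g Astar v) + b (g Astar v) - t ≤ v (g (threshN n b t) v) := by
    intro v hv t ht
    have hne : (threshN n b t).Nonempty := ⟨g Astar v, hmemthresh t _ ht⟩
    obtain ⟨hmem, hmax, -⟩ := hg (threshN n b t) v hne
    have h1 := hmax (g Astar v) (hmemthresh t _ ht)
    have h2 : b (g (threshN n b t) v) ≤ t := by
      simp only [threshN, mem_filter] at hmem; exact hmem.2
    linarith
  have hUlb : ∀ (t : ℝ) (h : (Fin n → ℝ) → ℝ),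
      (∀ v ∈ S, h v ≤ v (g (threshN n b t) v)) →
      ∑ v ∈ S, p v * h v ≤ utilN S p g (threshN n b t) := by
    intro t h hh
    exact Finset.sum_le_sum fun v hv =>
      mul_le_mul_of_nonneg_left (hh v hv) (hpn v hv)
  set 𝒯 : Finset ℝ := insert B (S.image fun v => b (g Astar v)) with h𝒯
  obtain ⟨t₀, ht₀T, ht₀max⟩ :=
    𝒯.exists_max_image (fun t => utilN S p g (threshN n b t))
      ⟨B, mem_insert_self _ _⟩
  set T := utilN S p g (threshN n b t₀) with hTdef
  have hT0 : 0 ≤ T := by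
    have := hUlb t₀ (fun _ => 0) (fun v hv => hvnn v hv _)
    simpa using this
  have hthne : (threshN n b t₀).Nonempty := by
    rcases mem_insert.mp ht₀T with h | h
    · exact ⟨j₀, hmemthresh t₀ j₀ (le_of_eq h.symm)⟩
    · obtain ⟨v, -, hv⟩ := mem_image.mp h
      exact ⟨g Astar v, hmemthresh t₀ _ (le_of_eq hv)⟩
  set d : (Fin n → ℝ) → ℝ := fun v => B - b (g Astar v) with hddef
  set S' := S.filter (fun v => p v ≠ 0) with hS'
  have hS'sub : S' ⊆ S := filter_subset _ _
  have hp' : ∀ v ∈ S', pmin ≤ p v := by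
    intro v hv
    have := mem_filter.mp hv
    exact hmass v this.1 this.2
  have hd' : ∀ v ∈ S', 0 ≤ d v := fun v _ => by
    simp only [hddef, sub_nonneg]; exact hβB v
  have hcon : ∀ v ∈ S', d v * (∑ w ∈ S'.filter (fun w => d v ≤ d w), p w) ≤ T := by
    intro v hv
    have hvS : v ∈ S := hS'sub hv
    set t := b (g Astar v) with htdef
    have htT : t ∈ 𝒯 := mem_insert_of_mem (mem_image_of_mem _ hvS)
    have hdv : 0 ≤ d v := hd' v hv
    have step1 : ∑ w ∈ S'.filter (fun w => d v ≤ d w), p w * d v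
        ≤ ∑ w ∈ S.filter (fun w => b (g Astar w) ≤ t), p w * d v := by
      apply Finset.sum_le_sum_of_subset_of_nonneg
      · intro w hw
        obtain ⟨hw1, hw2⟩ := mem_filter.mp hw
        refine mem_filter.mpr ⟨hS'sub hw1, ?_⟩
        simp only [hddef] at hw2; linarith
      · intro w hw _
        exact mul_nonneg (hpn w (mem_of_mem_filter w hw)) hdv
    have step2 : ∑ w ∈ S.filter (fun w => b (g Astar w) ≤ t), p w * d v
        = ∑ w ∈ S, p w * (if b (g Astar w) ≤ t then d v else 0) := by
      rw [Finset.sum_filter]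
      apply Finset.sum_congr rfl
      intro w _
      by_cases h : b (g Astar w) ≤ t <;> simp [h]
    have step3 : ∑ w ∈ S, p w * (if b (g Astar w) ≤ t then d v else 0)
        ≤ utilN S p g (threshN n b t) := by
      apply hUlb
      intro w hw
      by_cases h : b (g Astar w) ≤ t
      · simp only [h, if_true]
        have h1 := cover w hw t h
        have h2 := hcB w hw
        simp only [hddef]; linarith
      · simp only [h, if_false]
        exact hvnn w hw _
    have step4 : utilN S p g (threshN n b t) ≤ T := ht₀max t htT
    calc d v * (∑ w ∈ S'.filter (fun w => d v ≤ d w), p w)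
        = ∑ w ∈ S'.filter (fun w => d v ≤ d w), p w * d v := by
          rw [Finset.mul_sum]; apply Finset.sum_congr rfl; intro w _; ring
      _ ≤ T := le_trans step1 (le_trans (le_of_eq step2) (le_trans step3 step4))
  have hchain := chain_sum_le p d pmin T hpmin hT0 S' hp' hd' hcon
  -- sum over S of p*d equals sum over S'
  have hS'eq : ∑ v ∈ S', p v * d v = ∑ v ∈ S, p v * d v := by
    apply Finset.sum_subset hS'sub
    intro x hx hnx
    have : p x = 0 := by
      by_contra h
      exact hnx (mem_filter.mpr ⟨hx, h⟩)
    simp [this]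
  have hQ1 : ∑ v ∈ S', p v ≤ 1 := by
    rw [← hpsum]
    exact Finset.sum_le_sum_of_subset_of_nonneg hS'sub (fun v hv _ => hpn v hv)
  have hQnn : 0 ≤ ∑ v ∈ S', p v :=
    Finset.sum_nonneg fun v hv => hpn v (hS'sub hv)
  have hlogmono : Real.log ((∑ v ∈ S', p v) / pmin) ≤ Real.log (1 / pmin) := by
    rcases eq_or_lt_of_le hQnn with h | h
    · rw [← h]
      simp only [zero_div, Real.log_zero]
      apply Real.log_nonneg
      rw [le_div_iff₀ hpmin]; linarith
    · apply Real.log_le_log (by positivity)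
      exact div_le_div_of_nonneg_right hQ1 hpmin.le
  set L := Real.log (1 / pmin) with hLdef
  have hdsum : ∑ v ∈ S, p v * d v ≤ T * (1 + L) := by
    calc ∑ v ∈ S, p v * d v = ∑ v ∈ S', p v * d v := hS'eq.symm
      _ ≤ T * (1 + Real.log ((∑ v ∈ S', p v) / pmin)) := hchain
      _ ≤ T * (1 + L) := by nlinarith
  have h1 : ∑ v ∈ S, p v * (v (g Astar v) + b (g Astar v) - B) ≤ T := by
    refine le_trans (hUlb B _ (fun v hv => cover v hv B (hβB v))) ?_
    exact ht₀max B (mem_insert_self _ _)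
  have hsplit : utilN S p g Astar
      = ∑ v ∈ S, p v * (v (g Astar v) + b (g Astar v) - B)
        + ∑ v ∈ S, p v * d v := by
    rw [← Finset.sum_add_distrib]
    apply Finset.sum_congr rfl
    intro v _
    simp only [hddef]; ring
  have hOPT : utilN S p g Astar ≤ T * (2 + L) := by
    rw [hsplit]; nlinarith
  -- numeric endgame
  have hl2 : 0 < Real.log 2 := Real.log_pos one_lt_two
  have hl2' : Real.log 2 ≤ 1 := by
    have := Real.log_le_sub_one_of_pos (by norm_num : (0:ℝ) < 2)
    linarith
  have hLge : Real.log 2 ≤ L := by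
    apply Real.log_le_log (by norm_num)
    rw [le_div_iff₀ hpmin]; linarith
  have hLbig : (0.6931471803 : ℝ) < L := lt_of_lt_of_le Real.log_two_gt_d9 hLge
  have hL0 : 0 ≤ L := by linarith
  have hfrac : L ≤ L / Real.log 2 := by
    rw [le_div_iff₀ hl2]; nlinarith
  refine ⟨t₀, hthne, ?_⟩
  rw [Real.logb, ← hLdef]
  calc utilN S p g Astar ≤ T * (2 + L) := hOPT
    _ ≤ T * (4 * L) := by nlinarith
    _ ≤ 4 * (L / Real.log 2) * T := by nlinarith
end

section
/- Let A* be an optimal delegation set (no outside option), let t_0 = max{b_i : i ∈ A*}, and let t_1 ≤ t_0. Let B denote the random bias b_{g(A*,v)} of the action chosen from A*, and let OPT([t_1,t_0]) = E[v_{g(A*,v)} | B ∈ [t_1,t_0]] (defined when Pr[B ∈ [t_1,t_0]] > 0). Then f(A_{t_0}) ≥ Pr[B ∈ [t_1,t_0]] · (OPT([t_1,t_0]) − (t_0 − t_1)) and f(A_{t_1}) ≥ (t_0 − t_1) · Pr[B ≤ t_1]. Consequently, if Pr[B ∈ [t_1,t_0]] ≥ 1/2 and Pr[B ≤ t_1]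 ≥ 1/2, then f(A_{t_0}) + f(A_{t_1}) ≥ (1/2)·OPT([t_1,t_0]), so max{f(A_{t_0}), f(A_{t_1})} ≥ (1/4)·OPT([t_1,t_0]). -/
open Finset

/-- **two-threshold lemma.** Let `t₀ = max{b i : i ∈ A*}` and
`t₁ ≤ t₀`.  With `B = b_{g(A*,v)}`, `q = Pr[B ∈ [t₁,t₀]] > 0`,
`qlo = Pr[B ≤ t₁]`, and `OPTc = E[v_{g(A*,v)} | B ∈ [t₁,t₀]]`:
`f(A_{t₀}) ≥ q·(OPTc − (t₀ − t₁))` and `f(A_{t₁}) ≥ (t₀ − t₁)·qlo`; consequently,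
if `q ≥ 1/2` and `qlo ≥ 1/2`, then `f(A_{t₀}) + f(A_{t₁}) ≥ OPTc/2` and
`max{f(A_{t₀}), f(A_{t₁})} ≥ OPTc/4`. -/
theorem two_threshold_lemma {n : ℕ} (b : Fin n → ℝ)
    (S : Finset (Fin n → ℝ)) (p : (Fin n → ℝ) → ℝ) (hdist : ValidDistN S p)
    (g : Finset (Fin n) → (Fin n → ℝ) → Fin n) (hg : IsChoiceN n b g)
    (Astar : Finset (Fin n)) (hA : Astar.Nonempty)
    (hopt : ∀ A : Finset (Fin n), A.Nonempty → utilN S p g A ≤ utilN S p g Astar)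
    (t0 t1 : ℝ) (ht0 : t0 = Astar.sup' hA b) (ht1 : t1 ≤ t0)
    (q qlo OPTc : ℝ)
    (hq : q = ∑ v ∈ S.filter fun v => t1 ≤ b (g Astar v) ∧ b (g Astar v) ≤ t0, p v)
    (hqpos : 0 < q)
    (hqlo : qlo = ∑ v ∈ S.filter fun v => b (g Astar v) ≤ t1, p v)
    (hOPTc : OPTc =
      (∑ v ∈ S.filter fun v => t1 ≤ b (g Astar v) ∧ b (g Astar v) ≤ t0,
        p v * v (g Astar v)) / q) :
    q * (OPTc - (t0 - t1)) ≤ utilN S p g (threshN n b t0) ∧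
    (t0 - t1) * qlo ≤ utilN S p g (threshN n b t1) ∧
    (1 / 2 ≤ q → 1 / 2 ≤ qlo →
      OPTc / 2 ≤ utilN S p g (threshN n b t0) + utilN S p g (threshN n b t1) ∧
      OPTc / 4 ≤ max (utilN S p g (threshN n b t0)) (utilN S p g (threshN n b t1))) := by
  obtain ⟨hp0, hp1, hv0⟩ := hdist
  have hΔ0 : 0 ≤ t0 - t1 := by linarith
  have hutil_nonneg : ∀ A : Finset (Fin n), 0 ≤ utilN S p g A := by
    intro A
    exact Finset.sum_nonneg fun v hv => mul_nonneg (hp0 v hv) (hv0 v hv _)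
  obtain ⟨istar, histar, hbistar⟩ := Finset.exists_mem_eq_sup' hA b
  have hqne : q ≠ 0 := ne_of_gt hqpos
  have hnum : (∑ v ∈ S.filter fun v => t1 ≤ b (g Astar v) ∧ b (g Astar v) ≤ t0,
      p v * v (g Astar v)) = OPTc * q := by
    rw [hOPTc, div_mul_cancel₀ _ hqne]
  have hOPTc0 : 0 ≤ OPTc := by
    rw [hOPTc]
    apply div_nonneg _ (le_of_lt hqpos)
    exact Finset.sum_nonneg fun v hv =>
      mul_nonneg (hp0 v (Finset.mem_filter.mp hv).1) (hv0 v (Finset.mem_filter.mp hv).1 _)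
  -- Claim 1
  have c1 : q * (OPTc - (t0 - t1)) ≤ utilN S p g (threshN n b t0) := by
    have step : ∀ v ∈ S.filter fun v => t1 ≤ b (g Astar v) ∧ b (g Astar v) ≤ t0,
        p v * v (g Astar v) - p v * (t0 - t1) ≤ p v * v (g (threshN n b t0) v) := by
      intro v hv
      rw [Finset.mem_filter] at hv
      obtain ⟨hvS, ht1b, hbt0⟩ := hv
      obtain ⟨hjmem, hmax, -⟩ := hg Astar v hA
      have hjT : g Astar v ∈ threshN n b t0 := by
        simp only [threshN, Finset.mem_filter, Finset.mem_univ, true_and]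
        rw [ht0]; exact Finset.le_sup' b hjmem
      obtain ⟨hkmem, hkmax, -⟩ := hg (threshN n b t0) v ⟨_, hjT⟩
      have hkb : b (g (threshN n b t0) v) ≤ t0 := by
        simpa [threshN] using hkmem
      have hge := hkmax _ hjT
      have hpv := hp0 v hvS
      nlinarith [hp0 v hvS]
    have key := Finset.sum_le_sum step
    have sub : ∑ v ∈ S.filter fun v => t1 ≤ b (g Astar v) ∧ b (g Astar v) ≤ t0,
        p v * v (g (threshN n b t0) v) ≤ utilN S p g (threshN n b t0) :=
      Finset.sum_le_sum_of_subset_of_nonneg (Finset.filter_subset _ _)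
        (fun v hv _ => mul_nonneg (hp0 v hv) (hv0 v hv _))
    have expand : ∑ v ∈ S.filter fun v => t1 ≤ b (g Astar v) ∧ b (g Astar v) ≤ t0,
        (p v * v (g Astar v) - p v * (t0 - t1)) = OPTc * q - q * (t0 - t1) := by
      rw [Finset.sum_sub_distrib, hnum, ← Finset.sum_mul, ← hq]
    rw [expand] at key
    nlinarith [key, sub]
  -- Claim 2
  have c2 : (t0 - t1) * qlo ≤ utilN S p g (threshN n b t1) := by
    have step : ∀ v ∈ S.filter fun v => b (g Astar v) ≤ t1,
        p v * (t0 - t1) ≤ p v * v (g (threshN n b t1) v) := by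
      intro v hv
      rw [Finset.mem_filter] at hv
      obtain ⟨hvS, hbt1⟩ := hv
      obtain ⟨hjmem, hmax, -⟩ := hg Astar v hA
      have hjT : g Astar v ∈ threshN n b t1 := by
        simp only [threshN, Finset.mem_filter, Finset.mem_univ, true_and]
        exact hbt1
      obtain ⟨hkmem, hkmax, -⟩ := hg (threshN n b t1) v ⟨_, hjT⟩
      have hkb : b (g (threshN n b t1) v) ≤ t1 := by
        simpa [threshN] using hkmem
      have hge := hkmax _ hjT
      have histarle := hmax _ histar
      have hvistar : 0 ≤ v istar := hv0 v hvS istar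
      have hbi : b istar = t0 := by rw [ht0, hbistar]
      have hpv := hp0 v hvS
      nlinarith
    have key := Finset.sum_le_sum step
    have sub : ∑ v ∈ S.filter fun v => b (g Astar v) ≤ t1,
        p v * v (g (threshN n b t1) v) ≤ utilN S p g (threshN n b t1) :=
      Finset.sum_le_sum_of_subset_of_nonneg (Finset.filter_subset _ _)
        (fun v hv _ => mul_nonneg (hp0 v hv) (hv0 v hv _))
    have expand : ∑ v ∈ S.filter fun v => b (g Astar v) ≤ t1,
        p v * (t0 - t1) = qlo * (t0 - t1) := by
      rw [← Finset.sum_mul, ← hqlo]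
    rw [expand] at key
    nlinarith [key, sub]
  refine ⟨c1, c2, fun hq2 hqlo2 => ?_⟩
  have hsum : OPTc / 2 ≤ utilN S p g (threshN n b t0) + utilN S p g (threshN n b t1) := by
    rcases le_or_gt (t0 - t1) OPTc with h | h
    · have h1 : (OPTc - (t0 - t1)) / 2 ≤ q * (OPTc - (t0 - t1)) := by nlinarith
      have h2 : (t0 - t1) / 2 ≤ (t0 - t1) * qlo := by nlinarith
      linarith
    · have h2 : OPTc / 2 ≤ (t0 - t1) * qlo := by nlinarith
      have := hutil_nonneg (threshN n b t0)
      linarith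
  refine ⟨hsum, ?_⟩
  rcases le_total (utilN S p g (threshN n b t0)) (utilN S p g (threshN n b t1)) with h | h
  · rw [max_eq_right h]; linarith
  · rw [max_eq_left h]; linarith
end
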